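/- arXiv:2002.05389 — 3 statements merged into one kernel-verified Lean document; each statement's English description precedes it below -/
import Mathlib

section
/- Let G_k (k ≥ 1) be the graph obtained from k copies of the 4-cycle (x_i, y_i, z_i, v_i, x_i) by identifying all vertices v_i into a single vertex v. Then γ(G_k) = k + 1 and G_k is γ-q-critical with q = n(G_k) − k = 2k + 1. -/
open SimpleGraph

/-- `D` is a dominating set of `G`. -/
def SimpleGraph.IsDomSet {V : Type*} (G : SimpleGraph V) (D : Set V) : Prop :=
  ∀ v ∉ D, ∃ u ∈ D, G.Adj u v

/-- The domination number of `G`. -/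
noncomputable def SimpleGraph.domNum {V : Type*} [Fintype V] (G : SimpleGraph V) : ℕ :=
  sInf {k | ∃ D : Finset V, D.card = k ∧ G.IsDomSet ↑D}

/-- The graph obtained from `G` by subdividing each edge in `F` once: each `e ∈ F`
contributes a new vertex adjacent to the two endpoints of `e`, and the edges of `F`
are removed. -/
def SimpleGraph.subdiv {V : Type*} (G : SimpleGraph V) (F : Finset (Sym2 V)) :
    SimpleGraph (V ⊕ {e : Sym2 V // e ∈ F}) :=
  SimpleGraph.fromRel (fun a b => match a, b with
    | Sum.inl u, Sum.inl v => G.Adj u v ∧ s(u, v) ∉ F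
    | Sum.inl u, Sum.inr e => u ∈ (e : Sym2 V)
    | _, _ => False)

/-- `G` is `γ`-`q`-critical: subdividing any `q` edges increases the domination number,
while some set of `q - 1` edges can be subdivided without increasing it. -/
def SimpleGraph.IsQCritical {V : Type*} [Fintype V] (G : SimpleGraph V) (q : ℕ) : Prop :=
  (∀ F : Finset (Sym2 V), ↑F ⊆ G.edgeSet → F.card = q →
      G.domNum < (G.subdiv F).domNum) ∧
  (∃ F : Finset (Sym2 V), ↑F ⊆ G.edgeSet ∧ F.card = q - 1 ∧
      (G.subdiv F).domNum = G.domNum)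

/-- The graph `G_k`: `k` four-cycles `xᵢ yᵢ zᵢ v` sharing the common vertex `v`.
Vertex `(i, 0)` is `xᵢ`, `(i, 1)` is `yᵢ`, `(i, 2)` is `zᵢ`, and `Sum.inr ()` is `v`. -/
def Gk (k : ℕ) : SimpleGraph ((Fin k × Fin 3) ⊕ Unit) :=
  SimpleGraph.fromRel (fun a b => match a, b with
    | Sum.inl (i, x), Sum.inl (j, y) => i = j ∧ ((x = 0 ∧ y = 1) ∨ (x = 1 ∧ y = 2))
    | Sum.inr _, Sum.inl (_, x) => x = 0 ∨ x = 2
    | _, _ => False)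

namespace GkProof
open Finset

variable {k : ℕ}

abbrev Vk (k : ℕ) := (Fin k × Fin 3) ⊕ Unit

def X (i : Fin k) : Vk k := Sum.inl (i, 0)
def Y (i : Fin k) : Vk k := Sum.inl (i, 1)
def Z (i : Fin k) : Vk k := Sum.inl (i, 2)
def vV : Vk k := Sum.inr ()

def E1 (i : Fin k) : Sym2 (Vk k) := s(X i, Y i)
def E2 (i : Fin k) : Sym2 (Vk k) := s(Y i, Z i)
def E3 (i : Fin k) : Sym2 (Vk k) := s(vV, X i)
def E4 (i : Fin k) : Sym2 (Vk k) := s(vV, Z i)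

lemma adj_X {a : Vk k} {i : Fin k} : (Gk k).Adj a (X i) ↔ a = Y i ∨ a = vV := by
  obtain (⟨j,c⟩|⟨⟩) := a
  · simp [Gk, X, Y, vV, fromRel_adj]; aesop
  · simp [Gk, X, Y, vV, fromRel_adj]
lemma adj_Y {a : Vk k} {i : Fin k} : (Gk k).Adj a (Y i) ↔ a = X i ∨ a = Z i := by
  obtain (⟨j,c⟩|⟨⟩) := a
  · simp [Gk, X, Y, Z, fromRel_adj]; aesop
  · simp [Gk, X, Y, Z, vV, fromRel_adj]
lemma adj_Z {a : Vk k} {i : Fin k} : (Gk k).Adj a (Z i) ↔ a = Y i ∨ a = vV := by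
  obtain (⟨j,c⟩|⟨⟩) := a
  · simp [Gk, Y, Z, vV, fromRel_adj]; aesop
  · simp [Gk, Y, Z, vV, fromRel_adj]
lemma adj_V {a : Vk k} : (Gk k).Adj a vV ↔ ∃ i, a = X i ∨ a = Z i := by
  obtain (⟨j,c⟩|⟨⟩) := a
  · simp [Gk, X, Z, vV, fromRel_adj]; aesop
  · simp [Gk, X, Z, vV, fromRel_adj]

lemma edge_cases {e : Sym2 (Vk k)} (he : e ∈ (Gk k).edgeSet) :
    ∃ i, e = E1 i ∨ e = E2 i ∨ e = E3 i ∨ e = E4 i := by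
  induction e using Sym2.ind with
  | _ a b =>
    rw [mem_edgeSet] at he
    obtain (⟨j,c⟩|⟨⟩) := b
    · fin_cases c
      · rcases adj_X.mp he with rfl | rfl
        · exact ⟨j, Or.inl (Sym2.eq_swap ▸ rfl)⟩
        · exact ⟨j, Or.inr (Or.inr (Or.inl rfl))⟩
      · rcases adj_Y.mp he with rfl | rfl
        · exact ⟨j, Or.inl rfl⟩
        · exact ⟨j, Or.inr (Or.inl (Sym2.eq_swap ▸ rfl))⟩
      · rcases adj_Z.mp he with rfl | rfl
        · exact ⟨j, Or.inr (Or.inl rfl)⟩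
        · exact ⟨j, Or.inr (Or.inr (Or.inr rfl))⟩
    · rcases adj_V.mp he with ⟨i, rfl | rfl⟩
      · exact ⟨i, Or.inr (Or.inr (Or.inl (Sym2.eq_swap ▸ rfl)))⟩
      · exact ⟨i, Or.inr (Or.inr (Or.inr (Sym2.eq_swap ▸ rfl)))⟩

-- distinctness of edges
@[simp] lemma E1_ne_E2 {i : Fin k} : E1 i ≠ E2 i := by simp [E1, E2, X, Y, Z, Sym2.eq_iff]
@[simp] lemma E1_ne_E3 {i : Fin k} : E1 i ≠ E3 i := by simp [E1, E3, X, Y, vV, Sym2.eq_iff]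
@[simp] lemma E1_ne_E4 {i : Fin k} : E1 i ≠ E4 i := by simp [E1, E4, X, Y, Z, vV, Sym2.eq_iff]
@[simp] lemma E2_ne_E3 {i j : Fin k} : E2 i ≠ E3 j := by simp [E2, E3, X, Y, Z, vV, Sym2.eq_iff]
@[simp] lemma E2_ne_E4 {i : Fin k} : E2 i ≠ E4 i := by simp [E2, E4, X, Y, Z, vV, Sym2.eq_iff]
@[simp] lemma E3_ne_E4 {i : Fin k} : E3 i ≠ E4 i := by simp [E3, E4, X, Z, vV, Sym2.eq_iff]
-- index functions
def vidx : Vk k → Option (Fin k)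
  | Sum.inl (i, _) => some i
  | Sum.inr _ => none

def omax : Option (Fin k) → Option (Fin k) → Option (Fin k)
  | none, b => b
  | some a, none => some a
  | some a, some b => some (a ⊔ b)

lemma omax_comm (a b : Option (Fin k)) : omax a b = omax b a := by
  cases a <;> cases b <;> simp [omax, sup_comm]

def eidx : Sym2 (Vk k) → Option (Fin k) :=
  Sym2.lift ⟨fun a b => omax (vidx a) (vidx b), fun a b => omax_comm _ _⟩

@[simp] lemma eidx_mk (a b : Vk k) : eidx s(a, b) = omax (vidx a) (vidx b) := rfl

@[simp] lemma eidx_E1 (i : Fin k) : eidx (E1 i) = some i := by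
  simp [E1, X, Y, vidx, omax]
@[simp] lemma eidx_E2 (i : Fin k) : eidx (E2 i) = some i := by
  simp [E2, Y, Z, vidx, omax]
@[simp] lemma eidx_E3 (i : Fin k) : eidx (E3 i) = some i := by
  simp [E3, X, vV, vidx, omax]
@[simp] lemma eidx_E4 (i : Fin k) : eidx (E4 i) = some i := by
  simp [E4, Z, vV, vidx, omax]

variable {F : Finset (Sym2 (Vk k))}

abbrev Wk (k : ℕ) (F : Finset (Sym2 (Vk k))) := Vk k ⊕ {e : Sym2 (Vk k) // e ∈ F}

def widx : Wk k F → Option (Fin k)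
  | Sum.inl a => vidx a
  | Sum.inr e => eidx e.1

@[simp] lemma widx_X (i : Fin k) : widx (F := F) (Sum.inl (X i)) = some i := rfl
@[simp] lemma widx_Y (i : Fin k) : widx (F := F) (Sum.inl (Y i)) = some i := rfl
@[simp] lemma widx_Z (i : Fin k) : widx (F := F) (Sum.inl (Z i)) = some i := rfl
@[simp] lemma widx_V : widx (F := F) (Sum.inl vV) = none := rfl
@[simp] lemma widx_E1 (i : Fin k) (h : E1 i ∈ F) : widx (Sum.inr ⟨E1 i, h⟩) = some i := by
  simp [widx]
@[simp] lemma widx_E2 (i : Fin k) (h : E2 i ∈ F) : widx (Sum.inr ⟨E2 i, h⟩) = some i := by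
  simp [widx]
@[simp] lemma widx_E3 (i : Fin k) (h : E3 i ∈ F) : widx (Sum.inr ⟨E3 i, h⟩) = some i := by
  simp [widx]
@[simp] lemma widx_E4 (i : Fin k) (h : E4 i ∈ F) : widx (Sum.inr ⟨E4 i, h⟩) = some i := by
  simp [widx]

-- generic subdiv adjacency
section
variable {V' : Type*} {G : SimpleGraph V'} {F' : Finset (Sym2 V')}
lemma subdiv_adj_ll {u w : V'} :
    (G.subdiv F').Adj (Sum.inl u) (Sum.inl w) ↔ G.Adj u w ∧ s(u, w) ∉ F' := by
  simp only [subdiv, fromRel_adj, ne_eq, Sum.inl.injEq]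
  constructor
  · rintro ⟨h, (h2|h2)⟩
    · exact h2
    · exact ⟨h2.1.symm, by rw [Sym2.eq_swap]; exact h2.2⟩
  · rintro ⟨h1, h2⟩
    exact ⟨fun h => (G.ne_of_adj h1) h, Or.inl ⟨h1, h2⟩⟩
lemma subdiv_adj_lr {u : V'} {e : {e : Sym2 V' // e ∈ F'}} :
    (G.subdiv F').Adj (Sum.inl u) (Sum.inr e) ↔ u ∈ (e : Sym2 V') := by
  simp [subdiv, fromRel_adj]
lemma subdiv_adj_rl {u : V'} {e : {e : Sym2 V' // e ∈ F'}} :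
    (G.subdiv F').Adj (Sum.inr e) (Sum.inl u) ↔ u ∈ (e : Sym2 V') := by
  rw [adj_comm]; exact subdiv_adj_lr
lemma subdiv_adj_rr {e f : {e : Sym2 V' // e ∈ F'}} :
    ¬ (G.subdiv F').Adj (Sum.inr e) (Sum.inr f) := by
  simp [subdiv, fromRel_adj]
end

-- domNum basics
section
variable {V' : Type*} [Fintype V'] [DecidableEq V'] {G : SimpleGraph V'}

lemma domNum_le {D : Finset V'} (h : G.IsDomSet ↑D) : G.domNum ≤ D.card :=
  Nat.sInf_le ⟨D, rfl, h⟩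

lemma exists_minDom (G : SimpleGraph V') :
    ∃ D : Finset V', D.card = G.domNum ∧ G.IsDomSet ↑D := by
  have hne : {n | ∃ D : Finset V', D.card = n ∧ G.IsDomSet ↑D}.Nonempty :=
    ⟨_, Finset.univ, rfl, fun v hv => absurd (by simp) hv⟩
  exact Nat.sInf_mem hne

lemma exists_dom {D : Finset V'} (hD : G.IsDomSet ↑D) (w : V') :
    ∃ u ∈ D, u = w ∨ G.Adj u w := by
  by_cases hw : w ∈ D
  · exact ⟨w, hw, Or.inl rfl⟩
  · obtain ⟨u, hu, ha⟩ := hD w (by simpa)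
    exact ⟨u, by simpa using hu, Or.inr ha⟩
end
-- neighborhood characterizations in the subdivided graph
variable (hF : (↑F : Set (Sym2 (Vk k))) ⊆ (Gk k).edgeSet)

include hF in
lemma nbrX {u : Wk k F} {i : Fin k}
    (h : u = Sum.inl (X i) ∨ ((Gk k).subdiv F).Adj u (Sum.inl (X i))) :
    u = Sum.inl (X i) ∨ (u = Sum.inl (Y i) ∧ E1 i ∉ F) ∨ (u = Sum.inl vV ∧ E3 i ∉ F)
      ∨ (∃ h1 : E1 i ∈ F, u = Sum.inr ⟨E1 i, h1⟩)
      ∨ (∃ h3 : E3 i ∈ F, u = Sum.inr ⟨E3 i, h3⟩) := by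
  rcases h with rfl | h
  · exact Or.inl rfl
  obtain (w | ⟨e, he⟩) := u
  · rw [subdiv_adj_ll] at h
    obtain ⟨ha, hne⟩ := h
    rcases adj_X.mp ha with rfl | rfl
    · refine Or.inr (Or.inl ⟨rfl, ?_⟩)
      rwa [E1, Sym2.eq_swap]
    · exact Or.inr (Or.inr (Or.inl ⟨rfl, hne⟩))
  · rw [subdiv_adj_rl] at h
    rcases edge_cases (hF he) with ⟨j, rfl | rfl | rfl | rfl⟩ <;>
      simp only [E1, E2, E3, E4, X, Y, Z, vV, Sym2.mem_iff, Sum.inl.injEq,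
        Prod.mk.injEq, reduceCtorEq, or_false, false_or] at h
    · obtain ⟨rfl, -⟩ : i = j ∧ (0 : Fin 3) = 0 := by
        rcases h with h | h
        · exact ⟨h.1, rfl⟩
        · exact absurd h.2 (by decide)
      exact Or.inr (Or.inr (Or.inr (Or.inl ⟨he, rfl⟩)))
    · exfalso; rcases h with h | h
      · exact absurd h.2 (by decide)
      · exact absurd h.2 (by decide)
    · obtain ⟨rfl, -⟩ : i = j ∧ (0 : Fin 3) = 0 := ⟨h.1, rfl⟩
      exact Or.inr (Or.inr (Or.inr (Or.inr ⟨he, rfl⟩)))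
    · exact absurd h.2 (by decide)
include hF in
lemma nbrY {u : Wk k F} {i : Fin k}
    (h : u = Sum.inl (Y i) ∨ ((Gk k).subdiv F).Adj u (Sum.inl (Y i))) :
    u = Sum.inl (Y i) ∨ (u = Sum.inl (X i) ∧ E1 i ∉ F) ∨ (u = Sum.inl (Z i) ∧ E2 i ∉ F)
      ∨ (∃ h1 : E1 i ∈ F, u = Sum.inr ⟨E1 i, h1⟩)
      ∨ (∃ h2 : E2 i ∈ F, u = Sum.inr ⟨E2 i, h2⟩) := by
  rcases h with rfl | h
  · exact Or.inl rfl
  obtain (w | ⟨e, he⟩) := u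
  · rw [subdiv_adj_ll] at h
    obtain ⟨ha, hne⟩ := h
    rcases adj_Y.mp ha with rfl | rfl
    · exact Or.inr (Or.inl ⟨rfl, hne⟩)
    · refine Or.inr (Or.inr (Or.inl ⟨rfl, ?_⟩))
      rwa [E2, Sym2.eq_swap]
  · rw [subdiv_adj_rl] at h
    rcases edge_cases (hF he) with ⟨j, rfl | rfl | rfl | rfl⟩ <;>
      simp only [E1, E2, E3, E4, X, Y, Z, vV, Sym2.mem_iff, Sum.inl.injEq,
        Prod.mk.injEq, reduceCtorEq, or_false, false_or] at h
    · obtain ⟨rfl, -⟩ : i = j ∧ (1 : Fin 3) = 1 := by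
        rcases h with h | h
        · exact absurd h.2 (by decide)
        · exact ⟨h.1, rfl⟩
      exact Or.inr (Or.inr (Or.inr (Or.inl ⟨he, rfl⟩)))
    · obtain ⟨rfl, -⟩ : i = j ∧ (1 : Fin 3) = 1 := by
        rcases h with h | h
        · exact ⟨h.1, rfl⟩
        · exact absurd h.2 (by decide)
      exact Or.inr (Or.inr (Or.inr (Or.inr ⟨he, rfl⟩)))
    · exact absurd h.2 (by decide)
    · exact absurd h.2 (by decide)

include hF in
lemma nbrZ {u : Wk k F} {i : Fin k}
    (h : u = Sum.inl (Z i) ∨ ((Gk k).subdiv F).Adj u (Sum.inl (Z i))) :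
    u = Sum.inl (Z i) ∨ (u = Sum.inl (Y i) ∧ E2 i ∉ F) ∨ (u = Sum.inl vV ∧ E4 i ∉ F)
      ∨ (∃ h2 : E2 i ∈ F, u = Sum.inr ⟨E2 i, h2⟩)
      ∨ (∃ h4 : E4 i ∈ F, u = Sum.inr ⟨E4 i, h4⟩) := by
  rcases h with rfl | h
  · exact Or.inl rfl
  obtain (w | ⟨e, he⟩) := u
  · rw [subdiv_adj_ll] at h
    obtain ⟨ha, hne⟩ := h
    rcases adj_Z.mp ha with rfl | rfl
    · exact Or.inr (Or.inl ⟨rfl, hne⟩)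
    · exact Or.inr (Or.inr (Or.inl ⟨rfl, hne⟩))
  · rw [subdiv_adj_rl] at h
    rcases edge_cases (hF he) with ⟨j, rfl | rfl | rfl | rfl⟩ <;>
      simp only [E1, E2, E3, E4, X, Y, Z, vV, Sym2.mem_iff, Sum.inl.injEq,
        Prod.mk.injEq, reduceCtorEq, or_false, false_or] at h
    · exfalso; rcases h with h | h
      · exact absurd h.2 (by decide)
      · exact absurd h.2 (by decide)
    · obtain ⟨rfl, -⟩ : i = j ∧ (2 : Fin 3) = 2 := by
        rcases h with h | h
        · exact absurd h.2 (by decide)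
        · exact ⟨h.1, rfl⟩
      exact Or.inr (Or.inr (Or.inr (Or.inl ⟨he, rfl⟩)))
    · exact absurd h.2 (by decide)
    · obtain ⟨rfl, -⟩ : i = j ∧ (2 : Fin 3) = 2 := ⟨h.1, rfl⟩
      exact Or.inr (Or.inr (Or.inr (Or.inr ⟨he, rfl⟩)))

include hF in
lemma nbrV {u : Wk k F}
    (h : u = Sum.inl vV ∨ ((Gk k).subdiv F).Adj u (Sum.inl vV)) :
    u = Sum.inl vV ∨ ∃ i, (u = Sum.inl (X i) ∧ E3 i ∉ F) ∨ (u = Sum.inl (Z i) ∧ E4 i ∉ F)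
      ∨ (∃ h3 : E3 i ∈ F, u = Sum.inr ⟨E3 i, h3⟩)
      ∨ (∃ h4 : E4 i ∈ F, u = Sum.inr ⟨E4 i, h4⟩) := by
  rcases h with rfl | h
  · exact Or.inl rfl
  obtain (w | ⟨e, he⟩) := u
  · rw [subdiv_adj_ll] at h
    obtain ⟨ha, hne⟩ := h
    rcases adj_V.mp ha with ⟨i, rfl | rfl⟩
    · refine Or.inr ⟨i, Or.inl ⟨rfl, ?_⟩⟩
      rwa [E3, Sym2.eq_swap]
    · refine Or.inr ⟨i, Or.inr (Or.inl ⟨rfl, ?_⟩)⟩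
      rwa [E4, Sym2.eq_swap]
  · rw [subdiv_adj_rl] at h
    rcases edge_cases (hF he) with ⟨j, rfl | rfl | rfl | rfl⟩ <;>
      simp only [E1, E2, E3, E4, X, Y, Z, vV, Sym2.mem_iff, Sum.inl.injEq,
        Prod.mk.injEq, reduceCtorEq, or_false, false_or, Sum.inr.injEq] at h
    · exact Or.inr ⟨j, Or.inr (Or.inr (Or.inl ⟨he, rfl⟩))⟩
    · exact Or.inr ⟨j, Or.inr (Or.inr (Or.inr ⟨he, rfl⟩))⟩

lemma nbrM {u : Wk k F} {e : Sym2 (Vk k)} {he : e ∈ F} {a b : Vk k} (hab : e = s(a, b))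
    (h : u = Sum.inr ⟨e, he⟩ ∨ ((Gk k).subdiv F).Adj u (Sum.inr ⟨e, he⟩)) :
    u = Sum.inr ⟨e, he⟩ ∨ u = Sum.inl a ∨ u = Sum.inl b := by
  rcases h with rfl | h
  · exact Or.inl rfl
  obtain (w | f) := u
  · rw [subdiv_adj_lr] at h
    subst hab
    rcases Sym2.mem_iff.mp h with rfl | rfl
    · exact Or.inr (Or.inl rfl)
    · exact Or.inr (Or.inr rfl)
  · exact absurd h subdiv_adj_rr
-- vertex distinctness
@[simp] lemma X_ne_Y {i j : Fin k} : X i ≠ Y j := by simp [X, Y]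
@[simp] lemma X_ne_Z {i j : Fin k} : X i ≠ Z j := by simp [X, Z]
@[simp] lemma Y_ne_Z {i j : Fin k} : Y i ≠ Z j := by simp [Y, Z]
@[simp] lemma Y_ne_X {i j : Fin k} : Y i ≠ X j := by simp [X, Y]
@[simp] lemma Z_ne_X {i j : Fin k} : Z i ≠ X j := by simp [X, Z]
@[simp] lemma Z_ne_Y {i j : Fin k} : Z i ≠ Y j := by simp [Y, Z]
@[simp] lemma X_ne_vV {i : Fin k} : X i ≠ vV := by simp [X, vV]
@[simp] lemma Y_ne_vV {i : Fin k} : Y i ≠ vV := by simp [Y, vV]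
@[simp] lemma Z_ne_vV {i : Fin k} : Z i ≠ vV := by simp [Z, vV]
@[simp] lemma E2_ne_E1 {i : Fin k} : E2 i ≠ E1 i := E1_ne_E2.symm 
@[simp] lemma E3_ne_E1 {i : Fin k} : E3 i ≠ E1 i := E1_ne_E3.symm
@[simp] lemma E4_ne_E1 {i : Fin k} : E4 i ≠ E1 i := E1_ne_E4.symm
@[simp] lemma E3_ne_E2 {i j : Fin k} : E3 i ≠ E2 j := E2_ne_E3.symm
@[simp] lemma E4_ne_E2 {i : Fin k} : E4 i ≠ E2 i := E2_ne_E4.symm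
@[simp] lemma E4_ne_E3 {i : Fin k} : E4 i ≠ E3 i := E3_ne_E4.symm

-- counting helpers
lemma two_le_filter {α : Type*} [DecidableEq α] {s : Finset α} {p : α → Prop}
    [DecidablePred p] {a b : α} (ha : a ∈ s) (hpa : p a) (hb : b ∈ s) (hpb : p b)
    (hab : a ≠ b) : 2 ≤ (s.filter p).card :=
  Finset.one_lt_card.mpr ⟨a, mem_filter.mpr ⟨ha, hpa⟩, b, mem_filter.mpr ⟨hb, hpb⟩, hab⟩

lemma three_le_filter {α : Type*} [DecidableEq α] {s : Finset α} {p : α → Prop}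
    [DecidablePred p] {a b c : α} (ha : a ∈ s) (hpa : p a) (hb : b ∈ s) (hpb : p b)
    (hc : c ∈ s) (hpc : p c) (hab : a ≠ b) (hac : a ≠ c) (hbc : b ≠ c) :
    3 ≤ (s.filter p).card := by
  have hsub : ({a, b, c} : Finset α) ⊆ s.filter p := by
    intro x hx
    simp only [mem_insert, mem_singleton] at hx
    rcases hx with rfl | rfl | rfl <;> exact mem_filter.mpr ⟨by assumption, by assumption⟩
  have : ({a, b, c} : Finset α).card = 3 := by
    rw [card_insert_of_notMem (by simp [hab, hac]), card_insert_of_notMem (by simp [hbc]),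
      card_singleton]
  exact this ▸ card_le_card hsub

lemma fib_sum {F : Finset (Sym2 (Vk k))} (D : Finset (Wk k F)) :
    D.card = (D.filter fun w => widx w = none).card
      + ∑ i : Fin k, (D.filter fun w => widx w = some i).card := by
  rw [card_eq_sum_card_fiberwise (f := widx) (t := Finset.univ) (fun x _ => mem_univ _)]
  rw [Fintype.sum_option (fun o => (D.filter fun w => widx w = o).card)]


include hF in
lemma cover {j : Fin k} : ∀ e ∈ F, eidx e = some j →
    e = E1 j ∨ e = E2 j ∨ e = E3 j ∨ e = E4 j := by
  intro e he hj
  rcases edge_cases (hF he) with ⟨i, rfl | rfl | rfl | rfl⟩ <;> simp at hj <;> subst hj <;> tauto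

include hF in
lemma miss2 {j : Fin k} {A B C D' : Sym2 (Vk k)} (hA : A ∉ F) (hB : B ∉ F)
    (hperm : ∀ e, e = E1 j ∨ e = E2 j ∨ e = E3 j ∨ e = E4 j → e = A ∨ e = B ∨ e = C ∨ e = D') :
    (F.filter fun e => eidx e = some j).card ≤ 2 := by
  have hsub : (F.filter fun e => eidx e = some j) ⊆ {C, D'} := by
    intro e he
    rw [mem_filter] at he
    rcases hperm e (cover hF e he.1 he.2) with rfl | rfl | rfl | rfl
    · exact absurd he.1 hA
    · exact absurd he.1 hB
    · simp
    · simp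
  exact (card_le_card hsub).trans ((card_insert_le _ _).trans (by simp))

include hF in
lemma exists_heavy (hcard : F.card = 2 * k + 1) :
    ∃ j, 3 ≤ (F.filter fun e => eidx e = some j).card := by
  by_contra hcon
  push_neg at hcon
  have h0 : (F.filter fun e => eidx e = none).card = 0 := by
    rw [card_eq_zero, filter_eq_empty_iff]
    intro e he
    rcases edge_cases (hF he) with ⟨i, rfl | rfl | rfl | rfl⟩ <;> simp
  have hsum : F.card = (F.filter fun e => eidx e = none).card
      + ∑ i : Fin k, (F.filter fun e => eidx e = some i).card := by
    rw [card_eq_sum_card_fiberwise (f := eidx) (t := Finset.univ) (fun x _ => mem_univ _)]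
    rw [Fintype.sum_option (fun o => (F.filter fun e => eidx e = o).card)]
  have hle : ∑ i : Fin k, (F.filter fun e => eidx e = some i).card ≤ ∑ _i : Fin k, 2 :=
    Finset.sum_le_sum (fun i _ => Nat.lt_succ_iff.mp (hcon i))
  simp only [Finset.sum_const, card_univ, Fintype.card_fin, smul_eq_mul] at hle
  omega
variable {D : Finset (Wk k F)}

include hF in
lemma P1 (hD : ((Gk k).subdiv F).IsDomSet ↑D) (i : Fin k) :
    1 ≤ (D.filter fun w => widx w = some i).card := by
  obtain ⟨u, hu, hadj⟩ := exists_dom hD (Sum.inl (Y i))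
  refine card_pos.mpr ⟨u, mem_filter.mpr ⟨hu, ?_⟩⟩
  rcases nbrY hF hadj with rfl | ⟨rfl, -⟩ | ⟨rfl, -⟩ | ⟨h, rfl⟩ | ⟨h, rfl⟩ <;> simp

include hF in
lemma vdom (hD : ((Gk k).subdiv F).IsDomSet ↑D) (hv : Sum.inl vV ∉ D) :
    ∃ l, (Sum.inl (X l) ∈ D ∧ E3 l ∉ F) ∨ (Sum.inl (Z l) ∈ D ∧ E4 l ∉ F)
      ∨ (∃ h, Sum.inr ⟨E3 l, h⟩ ∈ D) ∨ (∃ h, Sum.inr ⟨E4 l, h⟩ ∈ D) := by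
  obtain ⟨u, hu, hadj⟩ := exists_dom hD (Sum.inl vV)
  rcases nbrV hF hadj with rfl | ⟨i, ⟨rfl, h3⟩ | ⟨rfl, h4⟩ | ⟨h3, rfl⟩ | ⟨h4, rfl⟩⟩
  · exact absurd hu hv
  · exact ⟨i, Or.inl ⟨hu, h3⟩⟩
  · exact ⟨i, Or.inr (Or.inl ⟨hu, h4⟩)⟩
  · exact ⟨i, Or.inr (Or.inr (Or.inl ⟨h3, hu⟩))⟩
  · exact ⟨i, Or.inr (Or.inr (Or.inr ⟨h4, hu⟩))⟩

-- a dominator of Z l avoiding vV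
include hF in
lemma sideX (hD : ((Gk k).subdiv F).IsDomSet ↑D) (hv : Sum.inl vV ∉ D) (l : Fin k) :
    ∃ u ∈ D, widx u = some l ∧ (u = Sum.inl (Z l) ∨ u = Sum.inl (Y l)
      ∨ (∃ h : E2 l ∈ F, u = Sum.inr ⟨E2 l, h⟩) ∨ (∃ h : E4 l ∈ F, u = Sum.inr ⟨E4 l, h⟩)) := by
  obtain ⟨u, hu, hadj⟩ := exists_dom hD (Sum.inl (Z l))
  rcases nbrZ hF hadj with rfl | ⟨rfl, -⟩ | ⟨rfl, -⟩ | ⟨h, rfl⟩ | ⟨h, rfl⟩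
  · exact ⟨_, hu, by simp, Or.inl rfl⟩
  · exact ⟨_, hu, by simp, Or.inr (Or.inl rfl)⟩
  · exact absurd hu hv
  · exact ⟨_, hu, by simp, Or.inr (Or.inr (Or.inl ⟨h, rfl⟩))⟩
  · exact ⟨_, hu, by simp, Or.inr (Or.inr (Or.inr ⟨h, rfl⟩))⟩

-- a dominator of X l avoiding vV
include hF in
lemma sideZ (hD : ((Gk k).subdiv F).IsDomSet ↑D) (hv : Sum.inl vV ∉ D) (l : Fin k) :
    ∃ u ∈ D, widx u = some l ∧ (u = Sum.inl (X l) ∨ u = Sum.inl (Y l)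
      ∨ (∃ h : E1 l ∈ F, u = Sum.inr ⟨E1 l, h⟩) ∨ (∃ h : E3 l ∈ F, u = Sum.inr ⟨E3 l, h⟩)) := by
  obtain ⟨u, hu, hadj⟩ := exists_dom hD (Sum.inl (X l))
  rcases nbrX hF hadj with rfl | ⟨rfl, -⟩ | ⟨rfl, -⟩ | ⟨h, rfl⟩ | ⟨h, rfl⟩
  · exact ⟨_, hu, by simp, Or.inl rfl⟩
  · exact ⟨_, hu, by simp, Or.inr (Or.inl rfl)⟩
  · exact absurd hu hv
  · exact ⟨_, hu, by simp, Or.inr (Or.inr (Or.inl ⟨h, rfl⟩))⟩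
  · exact ⟨_, hu, by simp, Or.inr (Or.inr (Or.inr ⟨h, rfl⟩))⟩

include hF in
lemma P2full (hD : ((Gk k).subdiv F).IsDomSet ↑D) (hv : Sum.inl vV ∉ D) :
    ∃ l, 2 ≤ (D.filter fun w => widx w = some l).card ∧
      ((Sum.inl (X l) ∈ D ∧ E3 l ∉ F) ∨ (Sum.inl (Z l) ∈ D ∧ E4 l ∉ F)
        ∨ (∃ h, Sum.inr ⟨E3 l, h⟩ ∈ D) ∨ (∃ h, Sum.inr ⟨E4 l, h⟩ ∈ D)) := by
  obtain ⟨l, hform⟩ := vdom hF hD hv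
  refine ⟨l, ?_, hform⟩
  rcases hform with ⟨hd, -⟩ | ⟨hd, -⟩ | ⟨hm, hd⟩ | ⟨hm, hd⟩
  · obtain ⟨u, hu, hwi, hforms⟩ := sideX hF hD hv l
    refine two_le_filter hd (by simp) hu hwi ?_
    rcases hforms with rfl | rfl | ⟨h, rfl⟩ | ⟨h, rfl⟩ <;> simp
  · obtain ⟨u, hu, hwi, hforms⟩ := sideZ hF hD hv l
    refine two_le_filter hd (by simp) hu hwi ?_
    rcases hforms with rfl | rfl | ⟨h, rfl⟩ | ⟨h, rfl⟩ <;> simp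
  · obtain ⟨u, hu, hwi, hforms⟩ := sideX hF hD hv l
    refine two_le_filter hd (by simp) hu hwi ?_
    rcases hforms with rfl | rfl | ⟨h, rfl⟩ | ⟨h, rfl⟩ <;> simp
  · obtain ⟨u, hu, hwi, hforms⟩ := sideZ hF hD hv l
    refine two_le_filter hd (by simp) hu hwi ?_
    rcases hforms with rfl | rfl | ⟨h, rfl⟩ | ⟨h, rfl⟩ <;> simp
include hF in
set_option maxHeartbeats 1000000 in
lemma P3 {j : Fin k} (hD : ((Gk k).subdiv F).IsDomSet ↑D)
    (h3 : 3 ≤ (F.filter fun e => eidx e = some j).card) :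
    2 ≤ (D.filter fun w => widx w = some j).card := by
  by_cases he3 : E3 j ∈ F
  · by_cases he4 : E4 j ∈ F
    · obtain ⟨u1, hu1, ha1⟩ := exists_dom hD (Sum.inl (X j))
      obtain ⟨u2, hu2, ha2⟩ := exists_dom hD (Sum.inl (Z j))
      have c1 : u1 = Sum.inl (X j) ∨ (u1 = Sum.inl (Y j) ∧ E1 j ∉ F)
          ∨ (∃ h, u1 = Sum.inr ⟨E1 j, h⟩) ∨ (∃ h, u1 = Sum.inr ⟨E3 j, h⟩) := by
        rcases nbrX hF ha1 with h | h | h | h | h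
        · tauto
        · tauto
        · exact absurd he3 h.2
        · tauto
        · tauto
      have c2 : u2 = Sum.inl (Z j) ∨ (u2 = Sum.inl (Y j) ∧ E2 j ∉ F)
          ∨ (∃ h, u2 = Sum.inr ⟨E2 j, h⟩) ∨ (∃ h, u2 = Sum.inr ⟨E4 j, h⟩) := by
        rcases nbrZ hF ha2 with h | h | h | h | h
        · tauto
        · tauto
        · exact absurd he4 h.2
        · tauto
        · tauto
      rcases c1 with rfl | ⟨rfl, hm1⟩ | ⟨h1, rfl⟩ | ⟨h1, rfl⟩ <;>
        rcases c2 with rfl | ⟨rfl, hm2⟩ | ⟨h2, rfl⟩ | ⟨h2, rfl⟩ <;>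
        first
          | exact absurd (miss2 (C := E3 j) (D' := E4 j) hF hm1 hm2 (by tauto)) (by omega)
          | exact two_le_filter hu1 (by simp) hu2 (by simp) (by simp)
    · have he1 : E1 j ∈ F := by
        by_contra h
        exact absurd (miss2 (C := E2 j) (D' := E3 j) hF h he4 (by tauto)) (by omega)
      have he2 : E2 j ∈ F := by
        by_contra h
        exact absurd (miss2 (C := E1 j) (D' := E3 j) hF h he4 (by tauto)) (by omega)
      obtain ⟨u1, hu1, ha1⟩ := exists_dom hD (Sum.inl (X j))
      obtain ⟨u2, hu2, ha2⟩ := exists_dom hD (Sum.inr ⟨E2 j, he2⟩)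
      have c1 : u1 = Sum.inl (X j) ∨ (∃ h, u1 = Sum.inr ⟨E1 j, h⟩)
          ∨ (∃ h, u1 = Sum.inr ⟨E3 j, h⟩) := by
        rcases nbrX hF ha1 with h | h | h | h | h
        · tauto
        · exact absurd he1 h.2
        · exact absurd he3 h.2
        · tauto
        · tauto
      have c2 : u2 = Sum.inr ⟨E2 j, he2⟩ ∨ u2 = Sum.inl (Y j) ∨ u2 = Sum.inl (Z j) :=
        nbrM rfl ha2
      rcases c1 with rfl | ⟨h1, rfl⟩ | ⟨h1, rfl⟩ <;>
        rcases c2 with rfl | rfl | rfl <;>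
        exact two_le_filter hu1 (by simp) hu2 (by simp) (by simp)
  · have he1 : E1 j ∈ F := by
      by_contra h
      exact absurd (miss2 (C := E2 j) (D' := E4 j) hF h he3 (by tauto)) (by omega)
    have he2 : E2 j ∈ F := by
      by_contra h
      exact absurd (miss2 (C := E1 j) (D' := E4 j) hF h he3 (by tauto)) (by omega)
    have he4 : E4 j ∈ F := by
      by_contra h
      exact absurd (miss2 (C := E1 j) (D' := E2 j) hF he3 h (by tauto)) (by omega)
    obtain ⟨u1, hu1, ha1⟩ := exists_dom hD (Sum.inr ⟨E1 j, he1⟩)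
    obtain ⟨u2, hu2, ha2⟩ := exists_dom hD (Sum.inl (Z j))
    have c1 : u1 = Sum.inr ⟨E1 j, he1⟩ ∨ u1 = Sum.inl (X j) ∨ u1 = Sum.inl (Y j) :=
      nbrM rfl ha1
    have c2 : u2 = Sum.inl (Z j) ∨ (∃ h, u2 = Sum.inr ⟨E2 j, h⟩)
        ∨ (∃ h, u2 = Sum.inr ⟨E4 j, h⟩) := by
      rcases nbrZ hF ha2 with h | h | h | h | h
      · tauto
      · exact absurd he2 h.2
      · exact absurd he4 h.2
      · tauto
      · tauto
    rcases c1 with rfl | rfl | rfl <;>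
      rcases c2 with rfl | ⟨h2, rfl⟩ | ⟨h2, rfl⟩ <;>
      exact two_le_filter hu1 (by simp) hu2 (by simp) (by simp)
include hF in
set_option maxHeartbeats 2000000 in
lemma P4 {j : Fin k} (hD : ((Gk k).subdiv F).IsDomSet ↑D) (hv : Sum.inl vV ∉ D)
    (h3 : 3 ≤ (F.filter fun e => eidx e = some j).card) :
    3 ≤ (D.filter fun w => widx w = some j).card
      ∨ ∃ l, l ≠ j ∧ 2 ≤ (D.filter fun w => widx w = some l).card := by
  obtain ⟨l, hl2, hform⟩ := P2full hF hD hv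
  by_cases hlj : l = j
  swap
  · exact Or.inr ⟨l, hlj, hl2⟩
  subst hlj
  left
  rcases hform with ⟨hd, hne3⟩ | ⟨hd, hne4⟩ | ⟨hm3, hd⟩ | ⟨hm4, hd⟩
  · -- d0 = X l, E3 ∉ F, hence E1, E2, E4 ∈ F
    have he1 : E1 l ∈ F := by
      by_contra h
      exact absurd (miss2 (C := E2 l) (D' := E4 l) hF h hne3 (by tauto)) (by omega)
    have he2 : E2 l ∈ F := by
      by_contra h
      exact absurd (miss2 (C := E1 l) (D' := E4 l) hF h hne3 (by tauto)) (by omega)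
    have he4 : E4 l ∈ F := by
      by_contra h
      exact absurd (miss2 (C := E1 l) (D' := E2 l) hF hne3 h (by tauto)) (by omega)
    obtain ⟨u1, hu1, ha1⟩ := exists_dom hD (Sum.inl (Y l))
    obtain ⟨u2, hu2, ha2⟩ := exists_dom hD (Sum.inr ⟨E4 l, he4⟩)
    have c1 : u1 = Sum.inl (Y l) ∨ (∃ h, u1 = Sum.inr ⟨E1 l, h⟩)
        ∨ (∃ h, u1 = Sum.inr ⟨E2 l, h⟩) := by
      rcases nbrY hF ha1 with h | h | h | h | h
      · tauto
      · exact absurd he1 h.2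
      · exact absurd he2 h.2
      · tauto
      · tauto
    have c2 : u2 = Sum.inr ⟨E4 l, he4⟩ ∨ u2 = Sum.inl (Z l) := by
      rcases nbrM rfl ha2 with h | h | h
      · tauto
      · rw [h] at hu2; exact absurd hu2 hv
      · tauto
    rcases c1 with rfl | ⟨h1, rfl⟩ | ⟨h1, rfl⟩ <;> rcases c2 with rfl | rfl <;>
      exact three_le_filter hd (by simp) hu1 (by simp) hu2 (by simp)
        (by simp) (by simp) (by simp)
  · -- d0 = Z l, E4 ∉ F, hence E1, E2, E3 ∈ F
    have he1 : E1 l ∈ F := by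
      by_contra h
      exact absurd (miss2 (C := E2 l) (D' := E3 l) hF h hne4 (by tauto)) (by omega)
    have he2 : E2 l ∈ F := by
      by_contra h
      exact absurd (miss2 (C := E1 l) (D' := E3 l) hF h hne4 (by tauto)) (by omega)
    have he3 : E3 l ∈ F := by
      by_contra h
      exact absurd (miss2 (C := E1 l) (D' := E2 l) hF h hne4 (by tauto)) (by omega)
    obtain ⟨u1, hu1, ha1⟩ := exists_dom hD (Sum.inl (Y l))
    obtain ⟨u2, hu2, ha2⟩ := exists_dom hD (Sum.inr ⟨E3 l, he3⟩)
    have c1 : u1 = Sum.inl (Y l) ∨ (∃ h, u1 = Sum.inr ⟨E1 l, h⟩)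
        ∨ (∃ h, u1 = Sum.inr ⟨E2 l, h⟩) := by
      rcases nbrY hF ha1 with h | h | h | h | h
      · tauto
      · exact absurd he1 h.2
      · exact absurd he2 h.2
      · tauto
      · tauto
    have c2 : u2 = Sum.inr ⟨E3 l, he3⟩ ∨ u2 = Sum.inl (X l) := by
      rcases nbrM rfl ha2 with h | h | h
      · tauto
      · rw [h] at hu2; exact absurd hu2 hv
      · tauto
    rcases c1 with rfl | ⟨h1, rfl⟩ | ⟨h1, rfl⟩ <;> rcases c2 with rfl | rfl <;>
      exact three_le_filter hd (by simp) hu1 (by simp) hu2 (by simp)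
        (by simp) (by simp) (by simp)
  · -- d0 = m3
    by_cases he1 : E1 l ∈ F
    · obtain ⟨u1, hu1, ha1⟩ := exists_dom hD (Sum.inr ⟨E1 l, he1⟩)
      have c1 : u1 = Sum.inr ⟨E1 l, he1⟩ ∨ u1 = Sum.inl (X l) ∨ u1 = Sum.inl (Y l) :=
        nbrM rfl ha1
      by_cases he4 : E4 l ∈ F
      · obtain ⟨u2, hu2, ha2⟩ := exists_dom hD (Sum.inr ⟨E4 l, he4⟩)
        have c2 : u2 = Sum.inr ⟨E4 l, he4⟩ ∨ u2 = Sum.inl (Z l) := by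
          rcases nbrM rfl ha2 with h | h | h
          · tauto
          · rw [h] at hu2; exact absurd hu2 hv
          · tauto
        rcases c1 with rfl | rfl | rfl <;> rcases c2 with rfl | rfl <;>
          exact three_le_filter hd (by simp) hu1 (by simp) hu2 (by simp)
            (by simp) (by simp) (by simp)
      · have he2 : E2 l ∈ F := by
          by_contra h
          exact absurd (miss2 (C := E1 l) (D' := E3 l) hF h he4 (by tauto)) (by omega)
        obtain ⟨u2, hu2, ha2⟩ := exists_dom hD (Sum.inl (Z l))
        have c2 : u2 = Sum.inl (Z l) ∨ (∃ h, u2 = Sum.inr ⟨E2 l, h⟩) := by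
          rcases nbrZ hF ha2 with h | h | h | h | h
          · tauto
          · exact absurd he2 h.2
          · rw [h.1] at hu2; exact absurd hu2 hv
          · tauto
          · exact absurd h.choose he4
        rcases c1 with rfl | rfl | rfl <;> rcases c2 with rfl | ⟨h2, rfl⟩ <;>
          exact three_le_filter hd (by simp) hu1 (by simp) hu2 (by simp)
            (by simp) (by simp) (by simp)
    · have he2 : E2 l ∈ F := by
        by_contra h
        exact absurd (miss2 (C := E3 l) (D' := E4 l) hF he1 h (by tauto)) (by omega)
      have he4 : E4 l ∈ F := by
        by_contra h
        exact absurd (miss2 (C := E2 l) (D' := E3 l) hF he1 h (by tauto)) (by omega)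
      obtain ⟨u1, hu1, ha1⟩ := exists_dom hD (Sum.inl (Y l))
      obtain ⟨u2, hu2, ha2⟩ := exists_dom hD (Sum.inr ⟨E4 l, he4⟩)
      have c1 : u1 = Sum.inl (Y l) ∨ u1 = Sum.inl (X l)
          ∨ (∃ h, u1 = Sum.inr ⟨E2 l, h⟩) := by
        rcases nbrY hF ha1 with h | h | h | h | h
        · tauto
        · tauto
        · exact absurd he2 h.2
        · exact absurd h.choose he1
        · tauto
      have c2 : u2 = Sum.inr ⟨E4 l, he4⟩ ∨ u2 = Sum.inl (Z l) := by
        rcases nbrM rfl ha2 with h | h | h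
        · tauto
        · rw [h] at hu2; exact absurd hu2 hv
        · tauto
      rcases c1 with rfl | rfl | ⟨h1, rfl⟩ <;> rcases c2 with rfl | rfl <;>
        exact three_le_filter hd (by simp) hu1 (by simp) hu2 (by simp)
          (by simp) (by simp) (by simp)
  · -- d0 = m4
    by_cases he2 : E2 l ∈ F
    · obtain ⟨u1, hu1, ha1⟩ := exists_dom hD (Sum.inr ⟨E2 l, he2⟩)
      have c1 : u1 = Sum.inr ⟨E2 l, he2⟩ ∨ u1 = Sum.inl (Y l) ∨ u1 = Sum.inl (Z l) :=
        nbrM rfl ha1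
      by_cases he3 : E3 l ∈ F
      · obtain ⟨u2, hu2, ha2⟩ := exists_dom hD (Sum.inr ⟨E3 l, he3⟩)
        have c2 : u2 = Sum.inr ⟨E3 l, he3⟩ ∨ u2 = Sum.inl (X l) := by
          rcases nbrM rfl ha2 with h | h | h
          · tauto
          · rw [h] at hu2; exact absurd hu2 hv
          · tauto
        rcases c1 with rfl | rfl | rfl <;> rcases c2 with rfl | rfl <;>
          exact three_le_filter hd (by simp) hu1 (by simp) hu2 (by simp)
            (by simp) (by simp) (by simp)
      · have he1 : E1 l ∈ F := by
          by_contra h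
          exact absurd (miss2 (C := E2 l) (D' := E4 l) hF h he3 (by tauto)) (by omega)
        obtain ⟨u2, hu2, ha2⟩ := exists_dom hD (Sum.inl (X l))
        have c2 : u2 = Sum.inl (X l) ∨ (∃ h, u2 = Sum.inr ⟨E1 l, h⟩) := by
          rcases nbrX hF ha2 with h | h | h | h | h
          · tauto
          · exact absurd he1 h.2
          · rw [h.1] at hu2; exact absurd hu2 hv
          · tauto
          · exact absurd h.choose he3
        rcases c1 with rfl | rfl | rfl <;> rcases c2 with rfl | ⟨h2, rfl⟩ <;>
          exact three_le_filter hd (by simp) hu1 (by simp) hu2 (by simp)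
            (by simp) (by simp) (by simp)
    · have he1 : E1 l ∈ F := by
        by_contra h
        exact absurd (miss2 (C := E3 l) (D' := E4 l) hF h he2 (by tauto)) (by omega)
      have he3 : E3 l ∈ F := by
        by_contra h
        exact absurd (miss2 (C := E1 l) (D' := E4 l) hF he2 h (by tauto)) (by omega)
      obtain ⟨u1, hu1, ha1⟩ := exists_dom hD (Sum.inl (Y l))
      obtain ⟨u2, hu2, ha2⟩ := exists_dom hD (Sum.inr ⟨E3 l, he3⟩)
      have c1 : u1 = Sum.inl (Y l) ∨ u1 = Sum.inl (Z l)
          ∨ (∃ h, u1 = Sum.inr ⟨E1 l, h⟩) := by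
        rcases nbrY hF ha1 with h | h | h | h | h
        · tauto
        · exact absurd he1 h.2
        · tauto
        · tauto
        · exact absurd h.choose he2
      have c2 : u2 = Sum.inr ⟨E3 l, he3⟩ ∨ u2 = Sum.inl (X l) := by
        rcases nbrM rfl ha2 with h | h | h
        · tauto
        · rw [h] at hu2; exact absurd hu2 hv
        · tauto
      rcases c1 with rfl | rfl | ⟨h1, rfl⟩ <;> rcases c2 with rfl | rfl <;>
        exact three_le_filter hd (by simp) hu1 (by simp) hu2 (by simp)
          (by simp) (by simp) (by simp)
lemma sum_ge_heavy {g : Fin k → ℕ} (h1 : ∀ i, 1 ≤ g i) {j : Fin k} {m : ℕ} (hj : m ≤ g j) :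
    m + (k - 1) ≤ ∑ i, g i := by
  rw [← Finset.add_sum_erase _ g (mem_univ j)]
  have h2 : (Finset.univ.erase j).card • 1 ≤ ∑ i ∈ Finset.univ.erase j, g i :=
    card_nsmul_le_sum _ _ _ (fun x _ => h1 x)
  have h3 : (Finset.univ.erase j).card = k - 1 := by
    rw [card_erase_of_mem (mem_univ j)]; simp
  rw [h3, smul_eq_mul, mul_one] at h2
  omega

lemma sum_two_two {g : Fin k → ℕ} (h1 : ∀ i, 1 ≤ g i) {j l : Fin k} (hjl : l ≠ j)
    (hj : 2 ≤ g j) (hl : 2 ≤ g l) : k + 2 ≤ ∑ i, g i := by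
  have hk2 : 2 ≤ k := by
    have h := Finset.one_lt_card.mpr ⟨l, mem_univ l, j, mem_univ j, hjl⟩
    simp at h; omega
  have hlm : l ∈ Finset.univ.erase j := mem_erase.mpr ⟨hjl, mem_univ l⟩
  rw [← Finset.add_sum_erase _ g (mem_univ j), ← Finset.add_sum_erase _ g hlm]
  have h2 : ((Finset.univ.erase j).erase l).card • 1 ≤ ∑ i ∈ (Finset.univ.erase j).erase l, g i :=
    card_nsmul_le_sum _ _ _ (fun x _ => h1 x)
  have h3 : ((Finset.univ.erase j).erase l).card = k - 2 := by
    rw [card_erase_of_mem hlm, card_erase_of_mem (mem_univ j)]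
    simp only [card_univ, Fintype.card_fin]
    omega
  rw [h3, smul_eq_mul, mul_one] at h2
  omega

include hF in
lemma LOW_all (hD : ((Gk k).subdiv F).IsDomSet ↑D) (hk : 1 ≤ k) : k + 1 ≤ D.card := by
  rw [fib_sum D]
  by_cases hv : Sum.inl vV ∈ D
  · have hn : 1 ≤ (D.filter fun w => widx w = none).card :=
      card_pos.mpr ⟨Sum.inl vV, mem_filter.mpr ⟨hv, by simp⟩⟩
    have hs : Finset.univ.card • 1 ≤ ∑ i : Fin k, (D.filter fun w => widx w = some i).card :=
      card_nsmul_le_sum _ _ _ (fun x _ => P1 hF hD x)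
    simp only [card_univ, Fintype.card_fin, smul_eq_mul, mul_one] at hs
    omega
  · obtain ⟨l, hl2, -⟩ := P2full hF hD hv
    have := sum_ge_heavy (P1 hF hD) hl2
    omega

include hF in
lemma LOW_heavy (hD : ((Gk k).subdiv F).IsDomSet ↑D) (hcard : F.card = 2 * k + 1) :
    k + 2 ≤ D.card := by
  obtain ⟨j, h3⟩ := exists_heavy hF hcard
  have hk : 1 ≤ k := j.pos
  rw [fib_sum D]
  by_cases hv : Sum.inl vV ∈ D
  · have hn : 1 ≤ (D.filter fun w => widx w = none).card :=
      card_pos.mpr ⟨Sum.inl vV, mem_filter.mpr ⟨hv, by simp⟩⟩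
    have := sum_ge_heavy (P1 hF hD) (P3 hF hD h3)
    omega
  · rcases P4 hF hD hv h3 with h | ⟨l, hlj, hl2⟩
    · have := sum_ge_heavy (P1 hF hD) h
      omega
    · have := sum_two_two (P1 hF hD) hlj (P3 hF hD h3) hl2
      omega
-- domination number of Gk itself
lemma gk_upper : (Gk k).domNum ≤ k + 1 := by
  classical
  have hdom : (Gk k).IsDomSet ↑(insert vV (Finset.univ.image (Y (k := k)))) := by
    intro w hw
    obtain (⟨i, c⟩ | ⟨⟩) := w
    · fin_cases c
      · exact ⟨vV, by simp, adj_X.mpr (Or.inr rfl)⟩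
      · exact absurd (by simp [Y] : (Sum.inl (i, 1) : Vk k) ∈
          (↑(insert vV (Finset.univ.image (Y (k := k)))) : Set (Vk k))) hw
      · exact ⟨vV, by simp, adj_Z.mpr (Or.inr rfl)⟩
    · exact absurd (by simp : (vV : Vk k) ∈
        (↑(insert vV (Finset.univ.image (Y (k := k)))) : Set (Vk k))) hw
  have hcard : (insert vV (Finset.univ.image (Y (k := k)))).card = k + 1 := by
    rw [card_insert_of_notMem (by simp [Y, vV]),
      card_image_of_injective _ (fun a b h => by simpa [Y] using h)]
    simp
  calc (Gk k).domNum ≤ _ := domNum_le hdom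
    _ = k + 1 := hcard

lemma gk_fib_sum (D : Finset (Vk k)) :
    D.card = (D.filter fun w => vidx w = none).card
      + ∑ i : Fin k, (D.filter fun w => vidx w = some i).card := by
  rw [card_eq_sum_card_fiberwise (f := vidx) (t := Finset.univ) (fun x _ => mem_univ _)]
  rw [Fintype.sum_option (fun o => (D.filter fun w => vidx w = o).card)]

@[simp] lemma vidx_X (i : Fin k) : vidx (X i) = some i := rfl
@[simp] lemma vidx_Y (i : Fin k) : vidx (Y i) = some i := rfl
@[simp] lemma vidx_Z (i : Fin k) : vidx (Z i) = some i := rfl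
@[simp] lemma vidx_V : vidx (vV (k := k)) = none := rfl

lemma gk_lower (hk : 1 ≤ k) {D : Finset (Vk k)} (hD : (Gk k).IsDomSet ↑D) :
    k + 1 ≤ D.card := by
  classical
  have h1 : ∀ i, 1 ≤ (D.filter fun w => vidx w = some i).card := by
    intro i
    obtain ⟨u, hu, hadj⟩ := exists_dom hD (Y i)
    refine card_pos.mpr ⟨u, mem_filter.mpr ⟨hu, ?_⟩⟩
    rcases hadj with rfl | hadj
    · simp
    · rcases adj_Y.mp hadj with rfl | rfl <;> simp
  rw [gk_fib_sum D]
  by_cases hv : vV ∈ D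
  · have hn : 1 ≤ (D.filter fun w => vidx w = none).card :=
      card_pos.mpr ⟨vV, mem_filter.mpr ⟨hv, by simp⟩⟩
    have hs : Finset.univ.card • 1 ≤ ∑ i : Fin k, (D.filter fun w => vidx w = some i).card :=
      card_nsmul_le_sum _ _ _ (fun x _ => h1 x)
    simp only [card_univ, Fintype.card_fin, smul_eq_mul, mul_one] at hs
    omega
  · obtain ⟨d0, hd0, hadj⟩ := exists_dom hD vV
    have hd0' : d0 ≠ vV := fun h => hv (h ▸ hd0)
    rcases hadj with rfl | hadj
    · exact absurd rfl hd0'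
    rcases adj_V.mp hadj with ⟨l, rfl | rfl⟩
    · -- d0 = X l; second: dominator of Z l
      obtain ⟨u, hu, hadj2⟩ := exists_dom hD (Z l)
      have hul : vidx u = some l ∧ u ≠ X l := by
        rcases hadj2 with rfl | hadj2
        · exact ⟨by simp, by simp⟩
        · rcases adj_Z.mp hadj2 with rfl | rfl
          · exact ⟨by simp, by simp⟩
          · exact absurd hu hv
      have h2 : 2 ≤ (D.filter fun w => vidx w = some l).card :=
        two_le_filter hd0 (by simp) hu hul.1 (fun h => hul.2 h.symm)
      have := sum_ge_heavy h1 h2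
      omega
    · -- d0 = Z l; second: dominator of X l
      obtain ⟨u, hu, hadj2⟩ := exists_dom hD (X l)
      have hul : vidx u = some l ∧ u ≠ Z l := by
        rcases hadj2 with rfl | hadj2
        · exact ⟨by simp, by simp⟩
        · rcases adj_X.mp hadj2 with rfl | rfl
          · exact ⟨by simp, by simp⟩
          · exact absurd hu hv
      have h2 : 2 ≤ (D.filter fun w => vidx w = some l).card :=
        two_le_filter hd0 (by simp) hu hul.1 (fun h => hul.2 h.symm)
      have := sum_ge_heavy h1 h2
      omega

lemma gk_domNum (hk : 1 ≤ k) : (Gk k).domNum = k + 1 := by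
  refine le_antisymm gk_upper ?_
  obtain ⟨D, hcard, hD⟩ := exists_minDom (Gk k)
  rw [← hcard]
  exact gk_lower hk hD
-- injectivity / cross-index distinctness
@[simp] lemma X_inj {i j : Fin k} : X i = X j ↔ i = j := by simp [X]
@[simp] lemma Y_inj {i j : Fin k} : Y i = Y j ↔ i = j := by simp [Y]
@[simp] lemma Z_inj {i j : Fin k} : Z i = Z j ↔ i = j := by simp [Z]
@[simp] lemma vV_ne_X {i : Fin k} : vV ≠ X i := by simp [X, vV]
@[simp] lemma vV_ne_Y {i : Fin k} : vV ≠ Y i := by simp [Y, vV]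
@[simp] lemma vV_ne_Z {i : Fin k} : vV ≠ Z i := by simp [Z, vV]
@[simp] lemma E1_inj {i j : Fin k} : E1 i = E1 j ↔ i = j := by
  simp [E1, Sym2.eq_iff]
@[simp] lemma E2_inj {i j : Fin k} : E2 i = E2 j ↔ i = j := by
  simp [E2, Sym2.eq_iff]
@[simp] lemma E1_ne_E2x {i j : Fin k} : E1 i ≠ E2 j := by
  simp [E1, E2, Sym2.eq_iff]
@[simp] lemma E2_ne_E1x {i j : Fin k} : E2 i ≠ E1 j := by
  simp [E1, E2, Sym2.eq_iff]
@[simp] lemma E3_ne_E1x {i j : Fin k} : E3 i ≠ E1 j := by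
  simp [E1, E3, Sym2.eq_iff]
@[simp] lemma E3_ne_E2x {i j : Fin k} : E3 i ≠ E2 j := by
  simp [E2, E3, Sym2.eq_iff]
@[simp] lemma E4_ne_E1x {i j : Fin k} : E4 i ≠ E1 j := by
  simp [E1, E4, Sym2.eq_iff]
@[simp] lemma E4_ne_E2x {i j : Fin k} : E4 i ≠ E2 j := by
  simp [E2, E4, Sym2.eq_iff]

def F0 (k : ℕ) : Finset (Sym2 (Vk k)) := Finset.univ.biUnion fun i => {E1 i, E2 i}

lemma mem_F0 {e : Sym2 (Vk k)} : e ∈ F0 k ↔ ∃ i, e = E1 i ∨ e = E2 i := by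
  simp [F0]

lemma E3_not_F0 {i : Fin k} : E3 i ∉ F0 k := by simp [mem_F0]
lemma E4_not_F0 {i : Fin k} : E4 i ∉ F0 k := by simp [mem_F0]

lemma F0_sub : (↑(F0 k) : Set (Sym2 (Vk k))) ⊆ (Gk k).edgeSet := by
  intro e he
  rw [Finset.mem_coe, mem_F0] at he
  obtain ⟨i, rfl | rfl⟩ := he
  · rw [show E1 i = s(X i, Y i) from rfl, mem_edgeSet]
    exact adj_Y.mpr (Or.inl rfl)
  · rw [show E2 i = s(Y i, Z i) from rfl, mem_edgeSet]
    exact adj_Z.mpr (Or.inl rfl)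

lemma F0_card : (F0 k).card = 2 * k := by
  rw [F0, card_biUnion]
  · have : ∀ i : Fin k, ({E1 i, E2 i} : Finset (Sym2 (Vk k))).card = 2 := by
      intro i
      rw [card_insert_of_notMem (by simp only [mem_singleton]; exact E1_ne_E2), card_singleton]
    rw [Finset.sum_congr rfl (fun i _ => this i)]
    simp [mul_comm]
  · intro x _ y _ hxy
    rw [Function.onFun, Finset.disjoint_left]
    intro a ha hb
    simp only [mem_insert, mem_singleton] at ha hb
    rcases ha with rfl | rfl <;> rcases hb with h | h
    · exact hxy (E1_inj.mp h)
    · exact absurd h E1_ne_E2x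
    · exact absurd h E2_ne_E1x
    · exact hxy (E2_inj.mp h)

lemma F0_upper : ((Gk k).subdiv (F0 k)).domNum ≤ k + 1 := by
  classical
  set D0 : Finset (Wk k (F0 k)) :=
    insert (Sum.inl vV) (Finset.univ.image fun i => Sum.inl (Y i)) with hD0
  have hdom : ((Gk k).subdiv (F0 k)).IsDomSet ↑D0 := by
    intro w hw
    obtain ((⟨i, c⟩ | ⟨⟩) | ⟨e, he⟩) := w
    · fin_cases c
      · refine ⟨Sum.inl vV, by simp [hD0], subdiv_adj_ll.mpr ⟨adj_X.mpr (Or.inr rfl), ?_⟩⟩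
        exact E3_not_F0
      · exact absurd (by simp [hD0, Y] : (Sum.inl (Sum.inl (i, 1)) : Wk k (F0 k)) ∈ ↑D0) hw
      · refine ⟨Sum.inl vV, by simp [hD0], subdiv_adj_ll.mpr ⟨adj_Z.mpr (Or.inr rfl), ?_⟩⟩
        exact E4_not_F0
    · exact absurd (by simp [hD0] : (Sum.inl vV : Wk k (F0 k)) ∈ ↑D0) hw
    · obtain ⟨i, hi⟩ := mem_F0.mp he
      refine ⟨Sum.inl (Y i), by simp [hD0], subdiv_adj_lr.mpr ?_⟩
      rcases hi with rfl | rfl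
      · exact Sym2.mem_iff.mpr (Or.inr rfl)
      · exact Sym2.mem_iff.mpr (Or.inl rfl)
  have hcard : D0.card = k + 1 := by
    rw [hD0, card_insert_of_notMem (by simp [Y, vV]),
      card_image_of_injective _ (fun a b h => by simpa [Y] using h)]
    simp
  calc ((Gk k).subdiv (F0 k)).domNum ≤ _ := domNum_le hdom
    _ = k + 1 := hcard

lemma F0_domNum (hk : 1 ≤ k) : ((Gk k).subdiv (F0 k)).domNum = k + 1 := by
  refine le_antisymm F0_upper ?_
  obtain ⟨D, hcard, hD⟩ := exists_minDom ((Gk k).subdiv (F0 k))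
  rw [← hcard]
  exact LOW_all F0_sub hD hk

end GkProof

open GkProof in
theorem stmt11 (k : ℕ) (hk : 1 ≤ k) :
    (Gk k).domNum = k + 1 ∧ (Gk k).IsQCritical (2 * k + 1) := by
  refine ⟨gk_domNum hk, ?_, ⟨F0 k, F0_sub, ?_, ?_⟩⟩
  · intro F hFe hFcard
    rw [gk_domNum hk]
    obtain ⟨D, hDcard, hD⟩ := exists_minDom ((Gk k).subdiv F)
    have h := LOW_heavy hFe hD hFcard
    omega
  · rw [F0_card]
    omega
  · rw [F0_domNum hk, gk_domNum hk]
end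

section
/- For any connected graph G of order n(G), size m(G), and independence number α(G), the corona H = G ⊙ K_1 is γ-q-critical with q = m(G) + 1 + α(G). -/
open SimpleGraph

/-- The corona `G ⊙ K₁`: attach one pendant leaf to every vertex of `G`. -/
def SimpleGraph.corona {V : Type*} (G : SimpleGraph V) : SimpleGraph (V ⊕ V) :=
  SimpleGraph.fromRel (fun a b => match a, b with
    | Sum.inl u, Sum.inl v => G.Adj u v
    | Sum.inl u, Sum.inr v => u = v
    | _, _ => False)

/-- The independence number of `G`. -/
noncomputable def SimpleGraph.indepNumFin {V : Type*} [Fintype V] (G : SimpleGraph V) : ℕ :=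
  sSup {k | ∃ A : Finset V, A.card = k ∧ ∀ x ∈ A, ∀ y ∈ A, ¬ G.Adj x y}

set_option linter.unusedSectionVars false

/-! ### auxiliary lemmas -/

section Aux
variable {V : Type*} {G : SimpleGraph V}

lemma corona_adj_inl_inl {u v : V} : G.corona.Adj (Sum.inl u) (Sum.inl v) ↔ G.Adj u v := by
  simp only [corona, fromRel_adj]
  constructor
  · rintro ⟨-, h | h⟩; exact h; exact h.symm
  · intro h; exact ⟨by simp [G.ne_of_adj h], Or.inl h⟩

lemma corona_adj_inl_inr {u v : V} : G.corona.Adj (Sum.inl u) (Sum.inr v) ↔ u = v := by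
  simp only [corona, fromRel_adj]
  constructor
  · rintro ⟨-, h | h⟩; exact h; exact h.elim
  · rintro rfl; exact ⟨by simp, Or.inl rfl⟩

lemma corona_adj_inr_inr {u v : V} : ¬ G.corona.Adj (Sum.inr u) (Sum.inr v) := by
  simp only [corona, fromRel_adj]
  rintro ⟨-, h | h⟩ <;> exact h

lemma subdiv_adj_inl_inl {F : Finset (Sym2 V)} {u v : V} :
    (G.subdiv F).Adj (Sum.inl u) (Sum.inl v) ↔ G.Adj u v ∧ s(u, v) ∉ F := by
  simp only [subdiv, fromRel_adj]
  constructor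
  · rintro ⟨-, h | h⟩
    · exact h
    · exact ⟨h.1.symm, by rw [Sym2.eq_swap]; exact h.2⟩
  · intro h; exact ⟨by simp [G.ne_of_adj h.1], Or.inl h⟩

lemma subdiv_adj_inl_inr {F : Finset (Sym2 V)} {u : V} {e : {e : Sym2 V // e ∈ F}} :
    (G.subdiv F).Adj (Sum.inl u) (Sum.inr e) ↔ u ∈ (e : Sym2 V) := by
  simp only [subdiv, fromRel_adj]
  constructor
  · rintro ⟨-, h | h⟩; exact h; exact h.elim
  · intro h; exact ⟨by simp, Or.inl h⟩

lemma subdiv_adj_inr_inr {F : Finset (Sym2 V)} {e e' : {e : Sym2 V // e ∈ F}} :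
    ¬ (G.subdiv F).Adj (Sum.inr e) (Sum.inr e') := by
  simp only [subdiv, fromRel_adj]
  rintro ⟨-, h | h⟩ <;> exact h

end Aux

section Num
variable {V : Type*} [Fintype V] (G : SimpleGraph V)

lemma domNum_le (D : Finset V) (hD : G.IsDomSet ↑D) : G.domNum ≤ D.card :=
  Nat.sInf_le ⟨D, rfl, hD⟩

lemma le_domNum (n : ℕ) (h : ∀ D : Finset V, G.IsDomSet ↑D → n ≤ D.card) : n ≤ G.domNum := by
  refine le_csInf ⟨Finset.univ.card, Finset.univ, rfl, ?_⟩ ?_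
  · intro v hv; simp at hv
  · rintro k ⟨D, rfl, hD⟩; exact h D hD

lemma indep_card_le (A : Finset V) (hA : ∀ x ∈ A, ∀ y ∈ A, ¬ G.Adj x y) :
    A.card ≤ G.indepNumFin :=
  le_csSup ⟨Fintype.card V, by rintro k ⟨A, rfl, -⟩; exact A.card_le_univ⟩ ⟨A, rfl, hA⟩

lemma exists_max_indep : ∃ A : Finset V, A.card = G.indepNumFin ∧
    ∀ x ∈ A, ∀ y ∈ A, ¬ G.Adj x y := by
  have h := Nat.sSup_mem (s := {k | ∃ A : Finset V, A.card = k ∧ ∀ x ∈ A, ∀ y ∈ A, ¬ G.Adj x y})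
    ⟨0, ∅, by simp⟩ ⟨Fintype.card V, by rintro k ⟨A, rfl, -⟩; exact A.card_le_univ⟩
  obtain ⟨A, hc, hA⟩ := h
  exact ⟨A, hc, hA⟩

end Num

/-! ### corona machinery -/

section Corona
variable {V : Type*}

/-- the pendant edge at `v` in the corona -/
def pend (v : V) : Sym2 (V ⊕ V) := s(Sum.inl v, Sum.inr v)

/-- the copy of an edge of `G` inside the corona -/
def gedge : Sym2 V → Sym2 (V ⊕ V) := Sym2.map Sum.inl

lemma pend_injective : Function.Injective (pend (V := V)) := by
  intro a b hab
  have : (Sum.inr a : V ⊕ V) ∈ pend b := by rw [← hab]; simp [pend]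
  simpa [pend] using this

lemma gedge_injective : Function.Injective (gedge (V := V)) :=
  Sym2.map.injective Sum.inl_injective

lemma pend_ne_gedge (v : V) (e : Sym2 V) : pend v ≠ gedge e := by
  intro h
  have : (Sum.inr v : V ⊕ V) ∈ gedge e := by rw [← h]; simp [pend]
  obtain ⟨a, -, ha⟩ := Sym2.mem_map.1 this
  exact Sum.inl_ne_inr ha

lemma inl_mem_gedge {u : V} {e : Sym2 V} : (Sum.inl u : V ⊕ V) ∈ gedge e ↔ u ∈ e := by
  constructor
  · intro h
    obtain ⟨a, ha, ha'⟩ := Sym2.mem_map.1 h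
    obtain rfl : a = u := Sum.inl_injective ha'
    exact ha
  · intro h; exact Sym2.mem_map.2 ⟨u, h, rfl⟩

variable {G : SimpleGraph V}

lemma mem_corona_edgeSet {e : Sym2 (V ⊕ V)} :
    e ∈ G.corona.edgeSet ↔ (∃ v, e = pend v) ∨ ∃ e' ∈ G.edgeSet, e = gedge e' := by
  constructor
  · induction e with
    | _ a b =>
      intro hab
      rw [SimpleGraph.mem_edgeSet] at hab
      match a, b with
      | Sum.inl u, Sum.inl v =>
        exact Or.inr ⟨s(u, v), corona_adj_inl_inl.1 hab, by simp [gedge]⟩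
      | Sum.inl u, Sum.inr v =>
        obtain rfl := corona_adj_inl_inr.1 hab
        exact Or.inl ⟨u, rfl⟩
      | Sum.inr u, Sum.inl v =>
        have hvu := corona_adj_inl_inr.1 hab.symm
        subst hvu
        exact Or.inl ⟨v, Sym2.eq_swap⟩
      | Sum.inr u, Sum.inr v => exact absurd hab corona_adj_inr_inr
  · rintro (⟨v, rfl⟩ | ⟨e', he', rfl⟩)
    · rw [pend, SimpleGraph.mem_edgeSet]
      exact corona_adj_inl_inr.2 rfl
    · induction e' with
      | _ x y =>
        rw [SimpleGraph.mem_edgeSet] at he'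
        show s(Sum.inl x, Sum.inl y) ∈ _
        rw [SimpleGraph.mem_edgeSet]
        exact corona_adj_inl_inl.2 he'

lemma eq_pend_of_inr_mem {e : Sym2 (V ⊕ V)} (he : e ∈ G.corona.edgeSet) {v : V}
    (hv : (Sum.inr v : V ⊕ V) ∈ e) : e = pend v := by
  rcases mem_corona_edgeSet.1 he with ⟨w, rfl⟩ | ⟨e', -, rfl⟩
  · have : v = w := by simpa [pend] using hv
    rw [this]
  · obtain ⟨a, -, ha⟩ := Sym2.mem_map.1 hv
    exact absurd ha (by simp)

end Corona

/-! ### domination in the subdivided corona -/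

section Dom
variable {V : Type*} [Fintype V] {G : SimpleGraph V} {F : Finset (Sym2 (V ⊕ V))}

/-- the leaf vertex of `v` inside the subdivided corona -/
abbrev leafS (F : Finset (Sym2 (V ⊕ V))) (v : V) : (V ⊕ V) ⊕ {e : Sym2 (V ⊕ V) // e ∈ F} :=
  Sum.inl (Sum.inr v)

lemma gadget_disjoint (hF : ↑F ⊆ G.corona.edgeSet)
    {x : (V ⊕ V) ⊕ {e : Sym2 (V ⊕ V) // e ∈ F}} {v v' : V}
    (h1 : x = leafS F v ∨ (G.corona.subdiv F).Adj x (leafS F v))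
    (h2 : x = leafS F v' ∨ (G.corona.subdiv F).Adj x (leafS F v')) : v = v' := by
  have key : ∀ w : V, (x = leafS F w ∨ (G.corona.subdiv F).Adj x (leafS F w)) →
      (∃ u, x = Sum.inl (Sum.inr u) ∧ u = w) ∨
      (∃ u, x = Sum.inl (Sum.inl u) ∧ u = w) ∨
      (∃ e : {e : Sym2 (V ⊕ V) // e ∈ F}, x = Sum.inr e ∧ (e : Sym2 (V ⊕ V)) = pend w) := by
    intro w hw
    match x, hw with
    | Sum.inl (Sum.inr u), Or.inl hx =>
      exact Or.inl ⟨u, rfl, by simpa using hx⟩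
    | Sum.inl (Sum.inr u), Or.inr hadj =>
      exact absurd (subdiv_adj_inl_inl.1 hadj).1 corona_adj_inr_inr
    | Sum.inl (Sum.inl u), Or.inr hadj =>
      exact Or.inr (Or.inl ⟨u, rfl, corona_adj_inl_inr.1 (subdiv_adj_inl_inl.1 hadj).1⟩)
    | Sum.inr e, Or.inr hadj =>
      have : (Sum.inr w : V ⊕ V) ∈ (e : Sym2 (V ⊕ V)) := subdiv_adj_inl_inr.1 hadj.symm
      exact Or.inr (Or.inr ⟨e, rfl, eq_pend_of_inr_mem (hF e.2) this⟩)
  rcases key v h1 with ⟨u, hx, rfl⟩ | ⟨u, hx, rfl⟩ | ⟨e, hx, he⟩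
  · subst hx
    rcases key v' h2 with ⟨u', hx', rfl⟩ | ⟨u', hx', rfl⟩ | ⟨e', hx', he'⟩
    · exact (by simpa using hx' : u = u')
    · exact absurd hx' (by simp)
    · exact absurd hx' (by simp)
  · subst hx
    rcases key v' h2 with ⟨u', hx', rfl⟩ | ⟨u', hx', rfl⟩ | ⟨e', hx', he'⟩
    · exact absurd hx' (by simp)
    · exact (by simpa using hx' : u = u')
    · exact absurd hx' (by simp)
  · subst hx
    rcases key v' h2 with ⟨u', hx', rfl⟩ | ⟨u', hx', rfl⟩ | ⟨e', hx', he'⟩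
    · exact absurd hx' (by simp)
    · exact absurd hx' (by simp)
    · obtain rfl : e = e' := by simpa using hx'
      exact pend_injective (he ▸ he')

set_option linter.unusedSectionVars false

lemma exists_dominator (D : Finset ((V ⊕ V) ⊕ {e : Sym2 (V ⊕ V) // e ∈ F}))
    (hD : (G.corona.subdiv F).IsDomSet ↑D) (v : V) :
    ∃ x ∈ D, x = leafS F v ∨ (G.corona.subdiv F).Adj x (leafS F v) := by
  by_cases h : leafS F v ∈ D
  · exact ⟨leafS F v, h, Or.inl rfl⟩
  · obtain ⟨u, hu, hadj⟩ := hD (leafS F v) (by simpa using h)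
    exact ⟨u, by simpa using hu, Or.inr hadj⟩

lemma card_lower (hF : ↑F ⊆ G.corona.edgeSet)
    (D : Finset ((V ⊕ V) ⊕ {e : Sym2 (V ⊕ V) // e ∈ F}))
    (hD : (G.corona.subdiv F).IsDomSet ↑D) : Fintype.card V ≤ D.card := by
  choose f hfD hfP using exists_dominator D hD
  rw [← Finset.card_univ]
  exact Finset.card_le_card_of_injOn f (fun v _ => hfD v)
    (fun a _ b _ hab => gadget_disjoint hF (hfP a) (hab ▸ hfP b))

lemma card_lower_strict (hF : ↑F ⊆ G.corona.edgeSet)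
    {e' : Sym2 V} (he' : e' ∈ G.edgeSet) (heF : gedge e' ∈ F)
    (hB : ∀ u ∈ e', pend u ∈ F)
    (D : Finset ((V ⊕ V) ⊕ {e : Sym2 (V ⊕ V) // e ∈ F}))
    (hD : (G.corona.subdiv F).IsDomSet ↑D) : Fintype.card V + 1 ≤ D.card := by
  classical
  choose f hfD hfP using exists_dominator D hD
  set xe : (V ⊕ V) ⊕ {e : Sym2 (V ⊕ V) // e ∈ F} := Sum.inr ⟨gedge e', heF⟩ with hxe
  have hz : ∃ z ∈ D, z = xe ∨ (G.corona.subdiv F).Adj z xe := by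
    by_cases h : xe ∈ D
    · exact ⟨xe, h, Or.inl rfl⟩
    · obtain ⟨u, hu, hadj⟩ := hD xe (by simpa using h)
      exact ⟨u, by simpa using hu, Or.inr hadj⟩
  obtain ⟨z, hzD, hzP⟩ := hz
  have hznot : z ∉ Finset.univ.image f := by
    simp only [Finset.mem_image, Finset.mem_univ, true_and]
    rintro ⟨v, rfl⟩
    rcases hzP with hz1 | hz2
    · -- f v = xe : an inr vertex; then its gadget pred forces gedge e' = pend v
      rcases hfP v with h | h
      · rw [hz1] at h; exact Sum.inr_ne_inl h
      · rw [hz1] at h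
        have hmem : (Sum.inr v : V ⊕ V) ∈ gedge e' := subdiv_adj_inl_inr.1 h.symm
        obtain ⟨a, -, ha⟩ := Sym2.mem_map.1 hmem
        exact Sum.inl_ne_inr ha
    · -- f v adjacent to xe : f v = inl (inl u) for endpoint u of e'
      match hfv : f v, hz2 with
      | Sum.inl w, hz2 =>
        have hw : w ∈ gedge e' := subdiv_adj_inl_inr.1 hz2
        obtain ⟨u, hue, rfl⟩ := Sym2.mem_map.1 hw
        rcases hfP v with h | h
        · rw [hfv] at h; exact Sum.inl_ne_inr (Sum.inl.injEq _ _ ▸ h : Sum.inl u = Sum.inr v) 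
        · rw [hfv] at h
          obtain ⟨hadj2, hnot⟩ := subdiv_adj_inl_inl.1 h
          obtain rfl := corona_adj_inl_inr.1 hadj2
          exact hnot (hB u hue)
      | Sum.inr e, hz2 =>
        exact absurd hz2 subdiv_adj_inr_inr
  have hsub : insert z (Finset.univ.image f) ⊆ D := by
    intro x hx
    rcases Finset.mem_insert.1 hx with rfl | hx
    · exact hzD
    · obtain ⟨v, -, rfl⟩ := Finset.mem_image.1 hx
      exact hfD v
  have hcard : (insert z (Finset.univ.image f)).card = Fintype.card V + 1 := by
    rw [Finset.card_insert_of_notMem hznot, Finset.card_image_of_injOn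
      (fun a _ b _ hab => gadget_disjoint hF (hfP a) (by rw [hab]; exact hfP b)), Finset.card_univ]
  calc Fintype.card V + 1 = _ := hcard.symm
    _ ≤ D.card := Finset.card_le_card hsub

lemma exists_dom_card (hF : ↑F ⊆ G.corona.edgeSet)
    (hcov : ∀ e' : Sym2 V, e' ∈ G.edgeSet → gedge e' ∈ F → ∃ u ∈ e', pend u ∉ F) :
    ∃ D : Finset ((V ⊕ V) ⊕ {e : Sym2 (V ⊕ V) // e ∈ F}),
      D.card = Fintype.card V ∧ (G.corona.subdiv F).IsDomSet ↑D := by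
  classical
  set d : V → (V ⊕ V) ⊕ {e : Sym2 (V ⊕ V) // e ∈ F} := fun v =>
    if h : pend v ∈ F then Sum.inr ⟨pend v, h⟩ else Sum.inl (Sum.inl v) with hd
  have hinj : Function.Injective d := by
    intro a b hab
    by_cases ha : pend a ∈ F <;> by_cases hb : pend b ∈ F <;>
      simp only [hd, ha, hb, dite_true, dite_false] at hab
    · exact pend_injective (by simpa using hab)
    · exact absurd hab (by simp)
    · exact absurd hab (by simp)
    · simpa using hab
  have hmemD : ∀ v, d v ∈ Finset.univ.image d := fun v =>
    Finset.mem_image.2 ⟨v, Finset.mem_univ v, rfl⟩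
  refine ⟨Finset.univ.image d,
    by rw [Finset.card_image_of_injective _ hinj, Finset.card_univ], ?_⟩
  intro x hx
  rw [Finset.mem_coe] at hx
  match x with
  | Sum.inl (Sum.inl v) =>
    by_cases hv : pend v ∈ F
    · refine ⟨Sum.inr ⟨pend v, hv⟩, ?_, ?_⟩
      · have := hmemD v; rw [hd] at this; simp only [hv, dite_true] at this
        exact Finset.mem_coe.2 this
      · exact (subdiv_adj_inl_inr.2 (by simp [pend])).symm
    · exact absurd (by have := hmemD v; rw [hd] at this; simpa only [hv, dite_false] using this) hx
  | Sum.inl (Sum.inr v) =>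
    by_cases hv : pend v ∈ F
    · refine ⟨Sum.inr ⟨pend v, hv⟩, ?_, ?_⟩
      · have := hmemD v; rw [hd] at this; simp only [hv, dite_true] at this
        exact Finset.mem_coe.2 this
      · exact (subdiv_adj_inl_inr.2 (by simp [pend])).symm
    · refine ⟨Sum.inl (Sum.inl v), ?_, ?_⟩
      · have := hmemD v; rw [hd] at this; simp only [hv, dite_false] at this
        exact Finset.mem_coe.2 this
      · exact subdiv_adj_inl_inl.2 ⟨corona_adj_inl_inr.2 rfl, hv⟩
  | Sum.inr ⟨e, he⟩ =>
    rcases mem_corona_edgeSet.1 (hF he) with ⟨v, rfl⟩ | ⟨e', he', rfl⟩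
    · exact absurd (by
        have := hmemD v; rw [hd] at this; simpa only [he, dite_true] using this) hx
    · obtain ⟨u, hue, hu⟩ := hcov e' he' he
      refine ⟨Sum.inl (Sum.inl u), ?_, ?_⟩
      · have := hmemD u; rw [hd] at this; simp only [hu, dite_false] at this
        exact Finset.mem_coe.2 this
      · exact subdiv_adj_inl_inr.2 (inl_mem_gedge.2 hue)

lemma domNum_corona : G.corona.domNum = Fintype.card V := by
  classical
  apply le_antisymm
  · have := domNum_le G.corona (Finset.univ.image Sum.inl) ?_
    · rwa [Finset.card_image_of_injective _ Sum.inl_injective, Finset.card_univ] at this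
    · intro x hx
      match x with
      | Sum.inl v => exact absurd (Finset.mem_coe.2
          (Finset.mem_image.2 ⟨v, Finset.mem_univ v, rfl⟩)) hx
      | Sum.inr v =>
        exact ⟨Sum.inl v, Finset.mem_coe.2 (Finset.mem_image.2 ⟨v, Finset.mem_univ v, rfl⟩),
          corona_adj_inl_inr.2 rfl⟩
  · apply le_domNum
    intro D hD
    have hch : ∀ v : V, ∃ x ∈ D, x = (Sum.inr v : V ⊕ V) ∨ x = Sum.inl v := by
      intro v
      by_cases h : (Sum.inr v : V ⊕ V) ∈ D
      · exact ⟨_, h, Or.inl rfl⟩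
      · obtain ⟨u, hu, hadj⟩ := hD (Sum.inr v) (by simpa using h)
        match u, hadj with
        | Sum.inl w, hadj =>
          obtain rfl := corona_adj_inl_inr.1 hadj
          exact ⟨Sum.inl w, by simpa using hu, Or.inr rfl⟩
        | Sum.inr w, hadj => exact absurd hadj corona_adj_inr_inr
    choose g hgD hgP using hch
    rw [← Finset.card_univ]
    refine Finset.card_le_card_of_injOn g (fun v _ => hgD v) ?_
    intro a _ b _ hab
    rcases hgP a with h1 | h1 <;> rcases hgP b with h2 | h2 <;>
      rw [h1, h2] at hab <;> simpa using hab

lemma counting [Fintype G.edgeSet] (hFsub : ↑F ⊆ G.corona.edgeSet)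
    (hFcard : F.card = G.edgeFinset.card + 1 + G.indepNumFin) :
    ∃ e' ∈ G.edgeSet, gedge e' ∈ F ∧ ∀ u ∈ e', pend u ∈ F := by
  classical
  by_contra hcon
  push_neg at hcon
  set B : Finset V := Finset.univ.filter (fun v => pend v ∈ F) with hB
  set FG : Finset (Sym2 V) := G.edgeFinset.filter (fun e' => gedge e' ∈ F) with hFG
  set EB : Finset (Sym2 V) := G.edgeFinset.filter (fun e' => ∀ u ∈ e', pend u ∈ F) with hEB
  -- F splits
  have hsplit : F = B.image pend ∪ FG.image gedge := by
    apply Finset.Subset.antisymm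
    · intro x hx
      rcases mem_corona_edgeSet.1 (hFsub hx) with ⟨v, rfl⟩ | ⟨e', he', rfl⟩
      · exact Finset.mem_union_left _ (Finset.mem_image.2
          ⟨v, Finset.mem_filter.2 ⟨Finset.mem_univ v, hx⟩, rfl⟩)
      · exact Finset.mem_union_right _ (Finset.mem_image.2
          ⟨e', Finset.mem_filter.2 ⟨SimpleGraph.mem_edgeFinset.2 he', hx⟩, rfl⟩)
    · intro x hx
      rcases Finset.mem_union.1 hx with hx | hx
      · obtain ⟨v, hv, rfl⟩ := Finset.mem_image.1 hx
        exact (Finset.mem_filter.1 hv).2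
      · obtain ⟨e', he', rfl⟩ := Finset.mem_image.1 hx
        exact (Finset.mem_filter.1 he').2
  have hdisj : Disjoint (B.image pend) (FG.image gedge) := by
    rw [Finset.disjoint_left]
    intro x hx1 hx2
    obtain ⟨v, -, rfl⟩ := Finset.mem_image.1 hx1
    obtain ⟨e', -, he'⟩ := Finset.mem_image.1 hx2
    exact pend_ne_gedge v e' he'.symm
  have hcard1 : F.card = B.card + FG.card := by
    rw [hsplit, Finset.card_union_of_disjoint hdisj,
      Finset.card_image_of_injective _ pend_injective,
      Finset.card_image_of_injective _ gedge_injective]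
  -- FG and EB are disjoint subsets of the edge finset
  have hdisj2 : Disjoint FG EB := by
    rw [Finset.disjoint_left]
    intro e' h1 h2
    obtain ⟨he1, he2⟩ := Finset.mem_filter.1 h1
    obtain ⟨-, he3⟩ := Finset.mem_filter.1 h2
    obtain ⟨u, hu1, hu2⟩ := hcon e' (SimpleGraph.mem_edgeFinset.1 he1) he2
    exact hu2 (he3 u hu1)
  have hcard2 : FG.card + EB.card ≤ G.edgeFinset.card := by
    rw [← Finset.card_union_of_disjoint hdisj2]
    exact Finset.card_le_card (Finset.union_subset (Finset.filter_subset _ _)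
      (Finset.filter_subset _ _))
  -- remove one endpoint of each edge inside B to get an independent set
  set B' : Finset V := B \ EB.image (fun e => e.out.1) with hB'
  have hindep : ∀ x ∈ B', ∀ y ∈ B', ¬ G.Adj x y := by
    intro x hx y hy hadj
    have hxB := Finset.mem_sdiff.1 hx
    have hyB := Finset.mem_sdiff.1 hy
    have hmem : s(x, y) ∈ EB := by
      refine Finset.mem_filter.2 ⟨SimpleGraph.mem_edgeFinset.2 hadj, ?_⟩
      intro u hu
      rcases Sym2.mem_iff.1 hu with rfl | rfl
      · exact (Finset.mem_filter.1 hxB.1).2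
      · exact (Finset.mem_filter.1 hyB.1).2
    have hout : (s(x, y)).out.1 ∈ s(x, y) := Sym2.out_fst_mem _
    rcases Sym2.mem_iff.1 hout with h | h
    · exact hxB.2 (Finset.mem_image.2 ⟨s(x, y), hmem, h⟩)
    · exact hyB.2 (Finset.mem_image.2 ⟨s(x, y), hmem, h⟩)
  have hle1 : B'.card ≤ G.indepNumFin := indep_card_le G B' hindep
  have hle2 : B.card ≤ B'.card + EB.card := by
    calc B.card ≤ B'.card + (EB.image (fun e => e.out.1)).card :=
          Finset.card_le_card_sdiff_add_card
      _ ≤ B'.card + EB.card := by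
          exact Nat.add_le_add_left (Finset.card_image_le) _
  omega

end Dom

theorem stmt13 {V : Type*} [Fintype V] (G : SimpleGraph V) [Fintype G.edgeSet]
    (h : G.Connected) :
    G.corona.IsQCritical (G.edgeFinset.card + 1 + G.indepNumFin) := by
  classical
  obtain ⟨A, hAcard, hAindep⟩ := exists_max_indep G
  constructor
  · -- subdividing any  m + 1 + α  edges increases the domination number
    intro F hFsub hFcard
    rw [domNum_corona]
    obtain ⟨e', he', heF, hBall⟩ := counting hFsub hFcard
    have hlow : Fintype.card V + 1 ≤ (G.corona.subdiv F).domNum :=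
      le_domNum _ _ (fun D hD => card_lower_strict hFsub he' heF hBall D hD)
    omega
  · -- subdividing all edges of G together with the pendant edges of a maximum
    -- independent set does not raise the domination number
    set Fw : Finset (Sym2 (V ⊕ V)) := (G.edgeFinset.image gedge) ∪ (A.image pend) with hFw
    have hFsub : ↑Fw ⊆ G.corona.edgeSet := by
      intro x hx
      rcases Finset.mem_union.1 hx with hx | hx
      · obtain ⟨e', he', rfl⟩ := Finset.mem_image.1 hx
        exact mem_corona_edgeSet.2 (Or.inr ⟨e', SimpleGraph.mem_edgeFinset.1 he', rfl⟩)
      · obtain ⟨v, -, rfl⟩ := Finset.mem_image.1 hx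
        exact mem_corona_edgeSet.2 (Or.inl ⟨v, rfl⟩)
    have hpendF : ∀ u : V, pend u ∈ Fw ↔ u ∈ A := by
      intro u
      constructor
      · intro hu
        rcases Finset.mem_union.1 hu with hu | hu
        · obtain ⟨e', -, he'⟩ := Finset.mem_image.1 hu
          exact absurd he'.symm (pend_ne_gedge u e')
        · obtain ⟨a, ha, hae⟩ := Finset.mem_image.1 hu
          rwa [← pend_injective hae]
      · intro hu
        exact Finset.mem_union_right _ (Finset.mem_image.2 ⟨u, hu, rfl⟩)
    refine ⟨Fw, hFsub, ?_, ?_⟩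
    · -- cardinality
      have hdisj : Disjoint (G.edgeFinset.image gedge) (A.image pend) := by
        rw [Finset.disjoint_left]
        intro x hx1 hx2
        obtain ⟨e', -, rfl⟩ := Finset.mem_image.1 hx1
        obtain ⟨v, -, hv⟩ := Finset.mem_image.1 hx2
        exact pend_ne_gedge v e' hv
      rw [hFw, Finset.card_union_of_disjoint hdisj,
        Finset.card_image_of_injective _ gedge_injective,
        Finset.card_image_of_injective _ pend_injective, hAcard]
      omega
    · -- the domination number stays the same
      rw [domNum_corona]
      apply le_antisymm
      · have hcov : ∀ e' : Sym2 V, e' ∈ G.edgeSet → gedge e' ∈ Fw → ∃ u ∈ e', pend u ∉ Fw := by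
          intro e' he' hgF
          induction e' with
          | _ x y =>
            have hadj : G.Adj x y := (SimpleGraph.mem_edgeSet G).1 he'
            by_cases hxA : x ∈ A
            · refine ⟨y, Sym2.mem_mk_right x y, ?_⟩
              rw [hpendF]
              intro hyA
              exact hAindep x hxA y hyA hadj
            · exact ⟨x, Sym2.mem_mk_left x y, fun hc => hxA ((hpendF x).1 hc)⟩
        obtain ⟨D, hDcard, hDdom⟩ := exists_dom_card (G := G) (F := Fw) hFsub hcov
        exact hDcard ▸ domNum_le _ D hDdom
      · exact le_domNum _ _ (fun D hD => card_lower hFsub D hD)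
end

section
/- A γ-q-critical tree T of order n(T) ≥ 3 satisfies q = n(T) − 1 if and only if T is isomorphic to the corona K_{1,r} ⊙ K_1 for some r ≥ 1 (equivalently, T is a slightly wounded spider obtained by subdividing all but one edge of a star K_{1,r+1}). -/
open SimpleGraph

namespace SimpleGraph

section Infra
variable {V : Type*} {W : Type*} (G : SimpleGraph V) (H : SimpleGraph W)

lemma isDomSet_univ [Fintype V] : G.IsDomSet ↑(Finset.univ : Finset V) := by
  intro v hv; exact absurd (Finset.mem_coe.2 (Finset.mem_univ v)) hv

lemma domNum_set_nonempty [Fintype V] :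
    {k | ∃ D : Finset V, D.card = k ∧ G.IsDomSet ↑D}.Nonempty :=
  ⟨_, Finset.univ, rfl, G.isDomSet_univ⟩

lemma exists_min_domSet [Fintype V] :
    ∃ D : Finset V, D.card = G.domNum ∧ G.IsDomSet ↑D :=
  Nat.sInf_mem G.domNum_set_nonempty

lemma domNum_le_card [Fintype V] {D : Finset V} (hD : G.IsDomSet ↑D) :
    G.domNum ≤ D.card :=
  Nat.sInf_le ⟨D, rfl, hD⟩

/-- Packing lower bound: vertices with pairwise "independent" closed neighborhoods. -/
lemma le_domNum_pack [Fintype V] {k : ℕ} (y : Fin k → V)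
    (hp : ∀ i j : Fin k, ∀ d : V,
      (d = y i ∨ G.Adj d (y i)) → (d = y j ∨ G.Adj d (y j)) → i = j) :
    k ≤ G.domNum := by
  classical
  obtain ⟨D, hcard, hdom⟩ := G.exists_min_domSet
  have hex : ∀ i : Fin k, ∃ d : V, d ∈ D ∧ (d = y i ∨ G.Adj d (y i)) := by
    intro i
    by_cases h : y i ∈ D
    · exact ⟨y i, h, Or.inl rfl⟩
    · obtain ⟨u, hu, hadj⟩ := hdom (y i) (by simpa using h)
      exact ⟨u, by simpa using hu, Or.inr hadj⟩
  choose d hdmem hdrel using hex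
  have hinj : Function.Injective d := by
    intro i j hij
    exact hp i j (d i) (hdrel i) (hij ▸ hdrel j)
  have hle : (Finset.univ : Finset (Fin k)).card ≤ D.card :=
    Finset.card_le_card_of_injOn d (fun i _ => hdmem i) hinj.injOn
  simpa [hcard] using hle

/-- Packing lower bound, arbitrary index type. -/
lemma le_domNum_pack' [Fintype V] {J : Type*} [Fintype J] (y : J → V)
    (hp : ∀ i j : J, ∀ d : V,
      (d = y i ∨ G.Adj d (y i)) → (d = y j ∨ G.Adj d (y j)) → i = j) :
    Fintype.card J ≤ G.domNum := by
  classical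
  obtain ⟨D, hcard, hdom⟩ := G.exists_min_domSet
  have hex : ∀ i : J, ∃ d : V, d ∈ D ∧ (d = y i ∨ G.Adj d (y i)) := by
    intro i
    by_cases h : y i ∈ D
    · exact ⟨y i, h, Or.inl rfl⟩
    · obtain ⟨u, hu, hadj⟩ := hdom (y i) (by simpa using h)
      exact ⟨u, by simpa using hu, Or.inr hadj⟩
  choose d hdmem hdrel using hex
  have hinj : Function.Injective d := by
    intro i j hij
    exact hp i j (d i) (hdrel i) (hij ▸ hdrel j)
  have hle : (Finset.univ : Finset J).card ≤ D.card :=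
    Finset.card_le_card_of_injOn d (fun i _ => hdmem i) hinj.injOn
  simpa [hcard] using hle

end Infra

section Adj
variable {V : Type*} {G : SimpleGraph V} {F : Finset (Sym2 V)}

@[simp] lemma subdiv_adj_inl_inl {u v : V} :
    (G.subdiv F).Adj (Sum.inl u) (Sum.inl v) ↔ G.Adj u v ∧ s(u, v) ∉ F := by
  simp only [subdiv, fromRel_adj]
  constructor
  · rintro ⟨hne, h | h⟩
    · exact h
    · exact ⟨h.1.symm, by rw [Sym2.eq_swap]; exact h.2⟩
  · intro h
    exact ⟨by simp [h.1.ne], Or.inl h⟩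

@[simp] lemma subdiv_adj_inl_inr {u : V} {e : {e : Sym2 V // e ∈ F}} :
    (G.subdiv F).Adj (Sum.inl u) (Sum.inr e) ↔ u ∈ (e : Sym2 V) := by
  simp only [subdiv, fromRel_adj]
  constructor
  · rintro ⟨hne, h | h⟩
    · exact h
    · exact h.elim
  · intro h; exact ⟨by simp, Or.inl h⟩

@[simp] lemma subdiv_adj_inr_inl {u : V} {e : {e : Sym2 V // e ∈ F}} :
    (G.subdiv F).Adj (Sum.inr e) (Sum.inl u) ↔ u ∈ (e : Sym2 V) := by
  rw [adj_comm]; exact subdiv_adj_inl_inr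

@[simp] lemma subdiv_adj_inr_inr {e f : {e : Sym2 V // e ∈ F}} :
    ¬ (G.subdiv F).Adj (Sum.inr e) (Sum.inr f) := by
  simp only [subdiv, fromRel_adj]
  rintro ⟨hne, h | h⟩ <;> exact h

@[simp] lemma corona_adj_inl_inl {u v : V} :
    G.corona.Adj (Sum.inl u) (Sum.inl v) ↔ G.Adj u v := by
  simp only [corona, fromRel_adj]
  constructor
  · rintro ⟨hne, h | h⟩
    · exact h
    · exact h.symm
  · intro h; exact ⟨by simp [h.ne], Or.inl h⟩

@[simp] lemma corona_adj_inl_inr {u v : V} :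
    G.corona.Adj (Sum.inl u) (Sum.inr v) ↔ u = v := by
  simp only [corona, fromRel_adj]
  constructor
  · rintro ⟨hne, h | h⟩
    · exact h
    · exact h.elim
  · intro h; exact ⟨by simp, Or.inl h⟩

@[simp] lemma corona_adj_inr_inl {u v : V} :
    G.corona.Adj (Sum.inr u) (Sum.inl v) ↔ v = u := by
  rw [adj_comm]; exact corona_adj_inl_inr

@[simp] lemma corona_adj_inr_inr {u v : V} :
    ¬ G.corona.Adj (Sum.inr u) (Sum.inr v) := by
  simp only [corona, fromRel_adj]
  rintro ⟨hne, h | h⟩ <;> exact h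

end Adj

lemma sym2_map_symm_self {V W : Type*} (φ : V ≃ W) (z : Sym2 W) :
    Sym2.map φ (Sym2.map φ.symm z) = z := by
  induction z using Sym2.ind with
  | _ x y => simp [Sym2.map_pair_eq]

lemma sym2_map_self_symm {V W : Type*} (φ : V ≃ W) (z : Sym2 V) :
    Sym2.map φ.symm (Sym2.map φ z) = z := by
  induction z using Sym2.ind with
  | _ x y => simp [Sym2.map_pair_eq]

lemma sym2_map_iso_symm {V W : Type*} {G : SimpleGraph V} {H : SimpleGraph W}
    (φ : G ≃g H) (z : Sym2 W) : Sym2.map ⇑φ (Sym2.map ⇑φ.symm z) = z := by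
  induction z using Sym2.ind with
  | _ x y => simp [Sym2.map_pair_eq]

section Transport
variable {V : Type*} {W : Type*} {G : SimpleGraph V} {H : SimpleGraph W}

/-- Transport of dominating sets through an isomorphism. -/
lemma IsDomSet.map_iso [Fintype V] [Fintype W] [DecidableEq W]
    (φ : G ≃g H) {D : Finset V} (hD : G.IsDomSet ↑D) :
    H.IsDomSet ↑(D.image φ) := by
  intro w hw
  have hvw : (φ.symm w : V) ∉ (D : Set V) := by
    intro hmem
    exact hw (by
      have : φ (φ.symm w) ∈ D.image φ := Finset.mem_image_of_mem _ hmem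
      simpa using this)
  obtain ⟨u, hu, hadj⟩ := hD _ hvw
  refine ⟨φ u, by simpa using Finset.mem_image_of_mem φ (by simpa using hu), ?_⟩
  have := φ.map_adj_iff.2 (by exact hadj)
  simpa using this

lemma domNum_le_of_iso [Fintype V] [Fintype W] (φ : G ≃g H) :
    H.domNum ≤ G.domNum := by
  classical
  obtain ⟨D, hcard, hdom⟩ := G.exists_min_domSet
  have := H.domNum_le_card (hdom.map_iso φ)
  calc H.domNum ≤ (D.image φ).card := this
    _ = D.card := Finset.card_image_of_injective _ φ.injective
    _ = G.domNum := hcard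

lemma domNum_congr [Fintype V] [Fintype W] (φ : G ≃g H) :
    G.domNum = H.domNum :=
  le_antisymm (domNum_le_of_iso φ.symm) (domNum_le_of_iso φ)

/-- The equiv `Sym2 V ≃ Sym2 W` induced by an equiv. -/
def _root_.Equiv.sym2Congr (φ : V ≃ W) : Sym2 V ≃ Sym2 W where
  toFun := Sym2.map φ
  invFun := Sym2.map φ.symm
  left_inv z := sym2_map_self_symm φ z
  right_inv z := sym2_map_symm_self φ z

lemma mem_edgeSet_iff_map (φ : G ≃g H) (e : Sym2 V) :
    e ∈ G.edgeSet ↔ Sym2.map φ e ∈ H.edgeSet := by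
  induction e using Sym2.ind with
  | _ x y => simp [Sym2.map_pair_eq, mem_edgeSet, φ.map_adj_iff]

/-- Transport of subdivisions through an isomorphism. -/
noncomputable def subdivIso [DecidableEq W] (φ : G ≃g H) (F : Finset (Sym2 V)) :
    G.subdiv F ≃g H.subdiv (F.image (Sym2.map φ)) where
  toEquiv := Equiv.sumCongr φ.toEquiv
    ((φ.toEquiv.sym2Congr).subtypeEquiv (by
      intro e
      constructor
      · intro he; exact Finset.mem_image_of_mem _ he
      · intro he
        obtain ⟨f, hf, hfe⟩ := Finset.mem_image.1 he
        have : f = e := Sym2.map.injective φ.injective (by exact hfe)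
        exact this ▸ hf))
  map_rel_iff' := by
    rintro (u | e) (v | f)
    · simp only [Equiv.sumCongr_apply, Sum.map_inl, subdiv_adj_inl_inl,
        RelIso.coe_fn_toEquiv]
      rw [φ.map_adj_iff]
      constructor
      · rintro ⟨ha, hne⟩
        refine ⟨ha, fun hmem => hne ?_⟩
        have : Sym2.map φ s(u,v) ∈ F.image (Sym2.map φ) := Finset.mem_image_of_mem _ hmem
        simpa [Sym2.map_pair_eq] using this
      · rintro ⟨ha, hne⟩
        refine ⟨ha, fun hmem => hne ?_⟩
        obtain ⟨g, hg, hge⟩ := Finset.mem_image.1 hmem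
        have : g = s(u,v) := Sym2.map.injective φ.injective
          (by rw [hge, Sym2.map_pair_eq])
        exact this ▸ hg
    · simp only [Equiv.sumCongr_apply, Sum.map_inl, Sum.map_inr, subdiv_adj_inl_inr]
      constructor
      · intro hmem
        simp only [Equiv.subtypeEquiv_apply] at hmem
        obtain ⟨a, ha, haeq⟩ := Sym2.mem_map.1 hmem
        have : a = u := φ.injective haeq
        exact this ▸ ha
      · intro hmem
        simp only [Equiv.subtypeEquiv_apply]
        exact Sym2.mem_map.2 ⟨u, hmem, rfl⟩
    · simp only [Equiv.sumCongr_apply, Sum.map_inl, Sum.map_inr, subdiv_adj_inr_inl]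
      constructor
      · intro hmem
        simp only [Equiv.subtypeEquiv_apply] at hmem
        obtain ⟨a, ha, haeq⟩ := Sym2.mem_map.1 hmem
        have : a = v := φ.injective haeq
        exact this ▸ ha
      · intro hmem
        simp only [Equiv.subtypeEquiv_apply]
        exact Sym2.mem_map.2 ⟨v, hmem, rfl⟩
    · constructor
      · intro h; exact absurd h (by simp)
      · intro h; exact absurd h (by simp)

lemma isQCritical_of_iso [Fintype V] [Fintype W] (φ : G ≃g H) {q : ℕ}
    (h : G.IsQCritical q) : H.IsQCritical q := by
  classical
  obtain ⟨h1, h2⟩ := h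
  constructor
  · intro F' hF' hcard'
    set F : Finset (Sym2 V) := F'.image (Sym2.map φ.symm) with hF
    have himg : F.image (Sym2.map φ) = F' := by
      ext g
      simp only [hF, Finset.mem_image]
      constructor
      · rintro ⟨f, ⟨g', hg', rfl⟩, rfl⟩
        rw [sym2_map_iso_symm φ g']; exact hg'
      · intro hg
        refine ⟨Sym2.map φ.symm g, ⟨g, hg, rfl⟩, ?_⟩
        rw [sym2_map_iso_symm φ g]
    have hsub : ↑F ⊆ G.edgeSet := by
      intro f hf
      simp only [hF, Finset.coe_image, Set.mem_image, Finset.mem_coe] at hf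
      obtain ⟨g, hg, rfl⟩ := hf
      rw [mem_edgeSet_iff_map φ]
      rw [sym2_map_iso_symm φ g]
      exact hF' hg
    have hfc : F.card = q := by
      rw [hF, Finset.card_image_of_injective _ (Sym2.map.injective φ.symm.injective), hcard']
    have hlt := h1 F hsub hfc
    have hd1 : G.domNum = H.domNum := domNum_congr φ
    have hd2 : (G.subdiv F).domNum = (H.subdiv F').domNum := by
      have := domNum_congr (subdivIso φ F)
      rwa [himg] at this
    omega
  · obtain ⟨F, hsub, hcard, heq⟩ := h2
    refine ⟨F.image (Sym2.map φ), ?_, ?_, ?_⟩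
    · intro g hg
      simp only [Finset.coe_image, Set.mem_image, Finset.mem_coe] at hg
      obtain ⟨f, hf, rfl⟩ := hg
      rw [← mem_edgeSet_iff_map φ]
      exact hsub hf
    · rw [Finset.card_image_of_injective _ (Sym2.map.injective φ.injective), hcard]
    · have hd2 := domNum_congr (subdivIso φ F)
      have hd1 : G.domNum = H.domNum := domNum_congr φ
      omega

end Transport

section Ore
variable {V : Type*} [Fintype V] {G : SimpleGraph V}

lemma exists_adj_of_connected (hconn : G.Connected) (h2 : 1 < Fintype.card V) (v : V) :
    ∃ w, G.Adj v w := by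
  have : Nontrivial V := Fintype.one_lt_card_iff_nontrivial.1 h2
  obtain ⟨y, hy⟩ := exists_ne v
  obtain ⟨w⟩ := hconn.preconnected v y
  cases w with
  | nil => exact absurd rfl hy.symm
  | cons h p => exact ⟨_, h⟩

lemma two_mul_domNum_le (hconn : G.Connected) (h2 : 1 < Fintype.card V) :
    2 * G.domNum ≤ Fintype.card V := by
  classical
  obtain ⟨D, hcard, hdom⟩ := G.exists_min_domSet
  have hout : ∀ v ∈ D, ∃ w, w ∉ D ∧ G.Adj v w := by
    intro v hv
    by_contra hno
    push_neg at hno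
    -- D.erase v is dominating, contradicting minimality
    have herase : G.IsDomSet ↑(D.erase v) := by
      intro x hx
      by_cases hxv : x = v
      · subst hxv
        obtain ⟨w, hw⟩ := exists_adj_of_connected hconn h2 x
        have hwD : w ∈ D := by
          by_contra hwd
          exact hno w hwd hw
        exact ⟨w, by simp [Finset.mem_erase, hw.ne', hwD], hw.symm⟩
      · have hxD : x ∉ D := by
          intro hxD
          exact hx (by simp [Finset.mem_erase, hxv, hxD])
        obtain ⟨u, hu, hadj⟩ := hdom x (by simpa using hxD)
        have huD : u ∈ D := by simpa using hu
        have huv : u ≠ v := by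
          rintro rfl
          exact hno x hxD hadj
        exact ⟨u, by simp [Finset.mem_erase, huv, huD], hadj⟩
    have := G.domNum_le_card herase
    have hlt : (D.erase v).card < D.card := Finset.card_erase_lt_of_mem hv
    omega
  have hcompl : G.IsDomSet ↑(Finset.univ \ D) := by
    intro v hv
    have hvD : v ∈ D := by
      by_contra hvD
      exact hv (by simp [hvD])
    obtain ⟨w, hwD, hadj⟩ := hout v hvD
    exact ⟨w, by simp [hwD], hadj.symm⟩
  have h1 := G.domNum_le_card hcompl
  have h2' : (Finset.univ \ D).card = Fintype.card V - D.card := by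
    rw [Finset.card_sdiff_of_subset (Finset.subset_univ D), Finset.card_univ]
  have h3 : D.card ≤ Fintype.card V := Finset.card_le_card (Finset.subset_univ D)
  omega

end Ore
end SimpleGraph

namespace SimpleGraph
section CoronaStar

variable {r : ℕ}

/-- vertex abbreviations for the corona of the star -/
private abbrev VC (r : ℕ) := (Fin 1 ⊕ Fin r) ⊕ (Fin 1 ⊕ Fin r)

private abbrev CG (r : ℕ) : SimpleGraph (VC r) :=
  (completeBipartiteGraph (Fin 1) (Fin r)).corona

private abbrev vc (r : ℕ) : VC r := Sum.inl (Sum.inl 0)     -- center c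
private abbrev vc' (r : ℕ) : VC r := Sum.inr (Sum.inl 0)    -- center pendant c'
private abbrev vx (r : ℕ) (i : Fin r) : VC r := Sum.inl (Sum.inr i)   -- support xᵢ
private abbrev vx' (r : ℕ) (i : Fin r) : VC r := Sum.inr (Sum.inr i)  -- leaf xᵢ'

lemma CG_adj_classify {a b : VC r} (h : (CG r).Adj a b) :
    s(a, b) = s(vc r, vc' r) ∨ (∃ i, s(a, b) = s(vc r, vx r i)) ∨
      (∃ i, s(a, b) = s(vx r i, vx' r i)) := by
  rcases a with (a | a) <;> rcases b with (b | b)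
  · rw [corona_adj_inl_inl] at h
    rcases a with a | i <;> rcases b with b | j
    · simp [completeBipartiteGraph] at h
    · obtain rfl : a = 0 := Subsingleton.elim _ _
      exact Or.inr (Or.inl ⟨j, rfl⟩)
    · obtain rfl : b = 0 := Subsingleton.elim _ _
      refine Or.inr (Or.inl ⟨i, ?_⟩)
      rw [Sym2.eq_swap]
    · simp [completeBipartiteGraph] at h
  · rw [corona_adj_inl_inr] at h
    subst h
    rcases a with a | i
    · obtain rfl : a = 0 := Subsingleton.elim _ _
      exact Or.inl rfl
    · exact Or.inr (Or.inr ⟨i, rfl⟩)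
  · rw [corona_adj_inr_inl] at h
    subst h
    rcases b with b | i
    · obtain rfl : b = 0 := Subsingleton.elim _ _
      left; rw [Sym2.eq_swap]
    · refine Or.inr (Or.inr ⟨i, ?_⟩); rw [Sym2.eq_swap]
  · exact absurd h corona_adj_inr_inr

lemma CG_adj_c_c' : (CG r).Adj (vc r) (vc' r) := by
  rw [corona_adj_inl_inr]

lemma CG_adj_c_x (i : Fin r) : (CG r).Adj (vc r) (vx r i) := by
  rw [corona_adj_inl_inl]; simp [completeBipartiteGraph]

lemma CG_adj_x_x' (i : Fin r) : (CG r).Adj (vx r i) (vx' r i) := by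
  rw [corona_adj_inl_inr]

/-- closed neighborhoods of the leaves -/
lemma CG_closed_c' {d : VC r} (h : d = vc' r ∨ (CG r).Adj d (vc' r)) :
    d = vc' r ∨ d = vc r := by
  rcases h with rfl | h
  · exact Or.inl rfl
  · rcases d with (d | d)
    · rw [corona_adj_inl_inr] at h
      exact Or.inr (by rw [h])
    · exact absurd h corona_adj_inr_inr

lemma CG_closed_x' {i : Fin r} {d : VC r} (h : d = vx' r i ∨ (CG r).Adj d (vx' r i)) :
    d = vx' r i ∨ d = vx r i := by
  rcases h with rfl | h
  · exact Or.inl rfl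
  · rcases d with (d | d)
    · rw [corona_adj_inl_inr] at h
      exact Or.inr (by rw [h])
    · exact absurd h corona_adj_inr_inr

/-- lower bound γ(CG r) ≥ r + 1 -/
lemma CG_domNum_lower : r + 1 ≤ (CG r).domNum := by
  classical
  have := (CG r).le_domNum_pack' (J := Fin r ⊕ Fin 1)
    (y := fun j => match j with
      | Sum.inl i => vx' r i
      | Sum.inr _ => vc' r) ?_
  · simpa using this
  · rintro (i | i) (j | j) d h1 h2
    · obtain rfl | rfl := CG_closed_x' h1 <;> obtain h | h := CG_closed_x' h2 <;>
        simp_all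
    · obtain rfl | rfl := CG_closed_x' h1 <;> obtain h | h := CG_closed_c' h2 <;>
        simp_all
    · obtain rfl | rfl := CG_closed_c' h1 <;> obtain h | h := CG_closed_x' h2 <;>
        simp_all
    · exact congrArg Sum.inr (Subsingleton.elim _ _)

/-- upper bound γ(CG r) ≤ r + 1 -/
lemma CG_domNum_upper : (CG r).domNum ≤ r + 1 := by
  classical
  have hdom : (CG r).IsDomSet
      ↑(insert (vc r) ((Finset.univ : Finset (Fin r)).image (vx r))) := by
    intro v hv
    simp only [Finset.coe_insert, Set.mem_insert_iff, Finset.coe_image,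
      Set.mem_image, Finset.mem_coe, Finset.mem_univ, not_or, not_exists] at hv
    rcases v with (v | v)
    · rcases v with v | i
      · obtain rfl : v = 0 := Subsingleton.elim _ _
        exact absurd rfl hv.1
      · exact (hv.2 i ⟨trivial, rfl⟩).elim
    · rcases v with v | i
      · obtain rfl : v = 0 := Subsingleton.elim _ _
        refine ⟨vc r, by simp, CG_adj_c_c'⟩
      · refine ⟨vx r i, by simp, CG_adj_x_x' i⟩
  have h0 := (CG r).domNum_le_card hdom
  have h1 := Finset.card_insert_le (vc r) ((Finset.univ : Finset (Fin r)).image (vx r))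
  have h2 : ((Finset.univ : Finset (Fin r)).image (vx r)).card ≤ r := by
    simpa using Finset.card_image_le (s := (Finset.univ : Finset (Fin r))) (f := vx r)
  omega

lemma CG_edge_classify {g : Sym2 (VC r)} (hg : g ∈ (CG r).edgeSet) :
    g = s(vc r, vc' r) ∨ (∃ i, g = s(vc r, vx r i)) ∨
      (∃ i, g = s(vx r i, vx' r i)) := by
  induction g using Sym2.ind with
  | _ a b => exact CG_adj_classify ((mem_edgeSet (CG r)).1 hg)

/-- Subdividing any set of edges avoiding the central pendant edge keeps γ ≤ r+1. -/
lemma CG_subdiv_domNum_upper (F : Finset (Sym2 (VC r)))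
    (hF : ↑F ⊆ (CG r).edgeSet) (he0 : s(vc r, vc' r) ∉ F) :
    ((CG r).subdiv F).domNum ≤ r + 1 := by
  classical
  set f : Fin r → (VC r) ⊕ {e : Sym2 (VC r) // e ∈ F} :=
    (fun i => if h : s(vx r i, vx' r i) ∈ F
      then Sum.inr ⟨s(vx r i, vx' r i), h⟩ else Sum.inl (vx r i)) with hf
  set D : Finset ((VC r) ⊕ {e : Sym2 (VC r) // e ∈ F}) :=
    insert (Sum.inl (vc r)) ((Finset.univ : Finset (Fin r)).image f) with hD
  have hdom : ((CG r).subdiv F).IsDomSet ↑D := by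
    intro v hv
    have hvD : v ∉ D := by simpa using hv
    rcases v with (a | ⟨g, hg⟩)
    · rcases a with (a | i) | (a | i)
      · obtain rfl : a = 0 := Subsingleton.elim _ _
        exact absurd (Finset.mem_insert_self _ _) hvD
      · -- support xᵢ
        by_cases h : s(vx r i, vx' r i) ∈ F
        · refine ⟨Sum.inr ⟨s(vx r i, vx' r i), h⟩, ?_, ?_⟩
          · simp only [hD, Finset.coe_insert, Set.mem_insert_iff, Finset.coe_image,
              Set.mem_image, Finset.mem_coe, Finset.mem_univ]
            exact Or.inr ⟨i, by simp, by simp only [hf]; exact dif_pos h⟩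
          · rw [subdiv_adj_inr_inl]
            simp
        · refine absurd ?_ hvD
          simp only [hD, Finset.mem_insert, Finset.mem_image, Finset.mem_univ]
          exact Or.inr ⟨i, by simp, by simp only [hf]; exact dif_neg h⟩
      · -- pendant c'
        obtain rfl : a = 0 := Subsingleton.elim _ _
        refine ⟨Sum.inl (vc r), by simp [hD], ?_⟩
        rw [subdiv_adj_inl_inl]
        exact ⟨CG_adj_c_c', he0⟩
      · -- leaf xᵢ'
        by_cases h : s(vx r i, vx' r i) ∈ F
        · refine ⟨Sum.inr ⟨s(vx r i, vx' r i), h⟩, ?_, ?_⟩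
          · simp only [hD, Finset.coe_insert, Set.mem_insert_iff, Finset.coe_image,
              Set.mem_image, Finset.mem_coe, Finset.mem_univ]
            exact Or.inr ⟨i, by simp, by simp only [hf]; exact dif_pos h⟩
          · rw [subdiv_adj_inr_inl]; simp
        · refine ⟨Sum.inl (vx r i), ?_, ?_⟩
          · simp only [hD, Finset.coe_insert, Set.mem_insert_iff, Finset.coe_image,
              Set.mem_image, Finset.mem_coe, Finset.mem_univ]
            exact Or.inr ⟨i, by simp, by simp only [hf]; exact dif_neg h⟩
          · rw [subdiv_adj_inl_inl]
            exact ⟨CG_adj_x_x' i, h⟩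
    · -- subdivision vertex of edge g ∈ F
      rcases CG_edge_classify (hF hg) with h | ⟨i, h⟩ | ⟨i, h⟩
      · exact absurd (h ▸ hg) he0
      · refine ⟨Sum.inl (vc r), by simp [hD], ?_⟩
        rw [subdiv_adj_inl_inr]
        simp [h]
      · refine absurd ?_ hvD
        simp only [hD, Finset.mem_insert, Finset.mem_image, Finset.mem_univ]
        refine Or.inr ⟨i, by simp, ?_⟩
        subst h
        simp only [hf]; exact dif_pos hg
  have h0 := ((CG r).subdiv F).domNum_le_card hdom
  have h1 := Finset.card_insert_le (Sum.inl (vc r) : (VC r) ⊕ {e : Sym2 (VC r) // e ∈ F})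
    ((Finset.univ : Finset (Fin r)).image f)
  have h2 : ((Finset.univ : Finset (Fin r)).image f).card ≤ r := by
    simpa using Finset.card_image_le (s := (Finset.univ : Finset (Fin r))) (f := f)
  rw [hD] at h0
  omega

/-- Subdividing all edges pushes γ up to at least r+2. -/
lemma CG_subdiv_full_lower (hr : 1 ≤ r) [Fintype ((CG r).edgeSet)] :
    r + 2 ≤ ((CG r).subdiv (CG r).edgeFinset).domNum := by
  classical
  set E : Finset (Sym2 (VC r)) := (CG r).edgeFinset with hE
  have hmem : ∀ {a b : VC r}, (CG r).Adj a b → s(a, b) ∈ E := by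
    intro a b hab
    rw [hE, mem_edgeFinset]
    exact hab
  set i0 : Fin r := ⟨0, hr⟩ with hi0
  -- no inl-inl adjacency in the full subdivision
  have hnoinl : ∀ u v : VC r, ¬ ((CG r).subdiv E).Adj (Sum.inl u) (Sum.inl v) := by
    intro u v h
    rw [subdiv_adj_inl_inl] at h
    exact h.2 (hmem h.1)
  -- closed neighborhood of leaf x'ᵢ
  have hNx' : ∀ (i : Fin r) (d : VC r ⊕ {e : Sym2 (VC r) // e ∈ E}),
      (d = Sum.inl (vx' r i) ∨ ((CG r).subdiv E).Adj d (Sum.inl (vx' r i))) →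
      d = Sum.inl (vx' r i) ∨ d = Sum.inr ⟨s(vx r i, vx' r i), hmem (CG_adj_x_x' i)⟩ := by
    rintro i d (rfl | hadj)
    · exact Or.inl rfl
    · rcases d with (u | ⟨g, hg⟩)
      · exact absurd hadj (hnoinl _ _)
      · rw [subdiv_adj_inr_inl] at hadj
        rcases CG_edge_classify ((mem_edgeFinset.1 hg)) with h | ⟨j, h⟩ | ⟨j, h⟩ <;>
          subst h <;> rw [Sym2.mem_iff] at hadj
        · simp [vx', vc, vc'] at hadj
        · simp [vx', vc, vx] at hadj
        · rcases hadj with h | h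
          · simp [vx', vx] at h
          · right
            simp only [vx'] at h
            obtain rfl : j = i := by simpa using h.symm
            rfl
  -- closed neighborhood of c'
  have hNc' : ∀ (d : VC r ⊕ {e : Sym2 (VC r) // e ∈ E}),
      (d = Sum.inl (vc' r) ∨ ((CG r).subdiv E).Adj d (Sum.inl (vc' r))) →
      d = Sum.inl (vc' r) ∨ d = Sum.inr ⟨s(vc r, vc' r), hmem CG_adj_c_c'⟩ := by
    rintro d (rfl | hadj)
    · exact Or.inl rfl
    · rcases d with (u | ⟨g, hg⟩)
      · exact absurd hadj (hnoinl _ _)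
      · rw [subdiv_adj_inr_inl] at hadj
        rcases CG_edge_classify ((mem_edgeFinset.1 hg)) with h | ⟨j, h⟩ | ⟨j, h⟩ <;>
          subst h <;> rw [Sym2.mem_iff] at hadj
        · exact Or.inr rfl
        · simp [vc', vc, vx] at hadj
        · simp [vc', vx, vx'] at hadj
  -- closed neighborhood of the subdivision vertex on the star edge c-x₀
  have hNw : ∀ (d : VC r ⊕ {e : Sym2 (VC r) // e ∈ E}),
      (d = Sum.inr ⟨s(vc r, vx r i0), hmem (CG_adj_c_x i0)⟩ ∨
        ((CG r).subdiv E).Adj d (Sum.inr ⟨s(vc r, vx r i0), hmem (CG_adj_c_x i0)⟩)) →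
      d = Sum.inr ⟨s(vc r, vx r i0), hmem (CG_adj_c_x i0)⟩ ∨
        d = Sum.inl (vc r) ∨ d = Sum.inl (vx r i0) := by
    rintro d (rfl | hadj)
    · exact Or.inl rfl
    · rcases d with (u | ⟨g, hg⟩)
      · rw [subdiv_adj_inl_inr] at hadj
        rw [Sym2.mem_iff] at hadj
        rcases hadj with rfl | rfl
        · exact Or.inr (Or.inl rfl)
        · exact Or.inr (Or.inr rfl)
      · exact absurd hadj (subdiv_adj_inr_inr)
  have hpack := ((CG r).subdiv E).le_domNum_pack' (J := Fin r ⊕ Fin 1 ⊕ Fin 1)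
    (y := fun j => match j with
      | Sum.inl i => Sum.inl (vx' r i)
      | Sum.inr (Sum.inl _) => Sum.inl (vc' r)
      | Sum.inr (Sum.inr _) => Sum.inr ⟨s(vc r, vx r i0), hmem (CG_adj_c_x i0)⟩) ?_
  · simpa using hpack
  · rintro (i | (i | i)) (j | (j | j)) d h1 h2
    · rcases hNx' i d h1 with h1' | h1' <;> rcases hNx' j d h2 with h2' | h2' <;>
        (have key := h1'.symm.trans h2'; clear * - key; simp_all [Sym2.eq_iff])
    · rcases hNx' i d h1 with h1' | h1' <;> rcases hNc' d h2 with h2' | h2' <;>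
        (have key := h1'.symm.trans h2'; clear * - key; simp_all [Sym2.eq_iff])
    · rcases hNx' i d h1 with h1' | h1' <;> rcases hNw d h2 with h2' | h2' | h2' <;>
        (have key := h1'.symm.trans h2'; clear * - key; simp_all [Sym2.eq_iff])
    · rcases hNc' d h1 with h1' | h1' <;> rcases hNx' j d h2 with h2' | h2' <;>
        (have key := h1'.symm.trans h2'; clear * - key; simp_all [Sym2.eq_iff])
    · exact congrArg (fun t => Sum.inr (Sum.inl t)) (Subsingleton.elim i j)
    · rcases hNc' d h1 with h1' | h1' <;> rcases hNw d h2 with h2' | h2' | h2' <;>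
        (have key := h1'.symm.trans h2'; clear * - key; simp_all [Sym2.eq_iff])
    · rcases hNw d h1 with h1' | h1' | h1' <;> rcases hNx' j d h2 with h2' | h2' <;>
        (have key := h1'.symm.trans h2'; clear * - key; simp_all [Sym2.eq_iff])
    · rcases hNw d h1 with h1' | h1' | h1' <;> rcases hNc' d h2 with h2' | h2' <;>
        (have key := h1'.symm.trans h2'; clear * - key; simp_all [Sym2.eq_iff])
    · exact congrArg (fun t => Sum.inr (Sum.inr t)) (Subsingleton.elim i j)

/-- Backward direction: if T ≅ corona of star K_{1,r}, criticality forces q = n-1. -/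
lemma backward_direction {V : Type*} [Fintype V] (T : SimpleGraph V) (hT : T.IsTree)
    {q r : ℕ} (hr : 1 ≤ r) (φ : T ≃g CG r) (h : T.IsQCritical q) :
    q = Fintype.card V - 1 := by
  classical
  letI : Fintype ((CG r).edgeSet) := Fintype.ofFinite _
  letI : Fintype (T.edgeSet) := Fintype.ofFinite _
  have hcard : Fintype.card V = 2 * r + 2 := by
    have := Fintype.card_congr φ.toEquiv
    simp only [Fintype.card_sum, Fintype.card_fin] at this
    omega
  have hC : (CG r).IsQCritical q := isQCritical_of_iso φ h
  have hTedge : T.edgeFinset.card = 2 * r + 1 := by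
    have h1 := hT.card_edgeFinset
    omega
  have hCedge : (CG r).edgeFinset.card = 2 * r + 1 := by
    have e1 : Fintype.card T.edgeSet = Fintype.card ((CG r).edgeSet) :=
      Fintype.card_congr (Iso.mapEdgeSet φ)
    have e2 : T.edgeFinset.card = Fintype.card T.edgeSet := by
      simp [edgeFinset, Set.toFinset_card]
    have e3 : (CG r).edgeFinset.card = Fintype.card ((CG r).edgeSet) := by
      simp [edgeFinset, Set.toFinset_card]
    omega
  have he0mem : s(vc r, vc' r) ∈ (CG r).edgeFinset := mem_edgeFinset.2 CG_adj_c_c'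
  have hlow : r + 1 ≤ (CG r).domNum := CG_domNum_lower
  have hup : (CG r).domNum ≤ r + 1 := CG_domNum_upper
  rcases lt_trichotomy q (2 * r + 1) with hq | hq | hq
  · -- q ≤ 2r: find a q-subset avoiding the central pendant edge: contradiction
    exfalso
    have hcard' : q ≤ ((CG r).edgeFinset.erase (s(vc r, vc' r))).card := by
      rw [Finset.card_erase_of_mem he0mem, hCedge]
      omega
    obtain ⟨F, hFsub, hFcard⟩ := Finset.exists_subset_card_eq hcard'
    have hFedge : ↑F ⊆ (CG r).edgeSet := by
      intro g hg
      have := hFsub hg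
      exact mem_edgeFinset.1 (Finset.mem_of_mem_erase this)
    have hlt := hC.1 F hFedge hFcard
    have he0F : s(vc r, vc' r) ∉ F := by
      intro hcon
      exact (Finset.notMem_erase _ _) (hFsub hcon)
    have := CG_subdiv_domNum_upper F hFedge he0F
    omega
  · omega
  · -- q ≥ 2r+2: the (q-1)-set must be all edges: contradiction
    exfalso
    obtain ⟨F, hsub, hcd, heq⟩ := hC.2
    have hFss : F ⊆ (CG r).edgeFinset := fun g hg => mem_edgeFinset.2 (hsub hg)
    have hFeq : F = (CG r).edgeFinset := by
      apply Finset.eq_of_subset_of_card_le hFss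
      rw [hCedge, hcd]
      omega
    subst hFeq
    have := CG_subdiv_full_lower (r := r) hr
    omega

/-- Build the isomorphism with the corona of a star from explicit witness data. -/
lemma iso_of_witness {V : Type*} [Fintype V] (T : SimpleGraph V) {r : ℕ}
    (u v : V) (a b : Fin r → V)
    (huv : u ≠ v)
    (hau : ∀ i, a i ≠ u) (hav : ∀ i, a i ≠ v)
    (hbu : ∀ i, b i ≠ u) (hbv : ∀ i, b i ≠ v)
    (hab : ∀ i j, a i ≠ b j)
    (ha : Function.Injective a) (hb : Function.Injective b)
    (hsurj : ∀ x : V, x = u ∨ x = v ∨ (∃ i, x = a i) ∨ (∃ i, x = b i))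
    (hadj : ∀ x y : V, T.Adj x y ↔
      (s(x, y) = s(u, v) ∨ (∃ i, s(x, y) = s(u, a i)) ∨
        (∃ i, s(x, y) = s(a i, b i)))) :
    Nonempty (T ≃g CG r) := by
  classical
  -- positive adjacencies
  have hA1 : T.Adj u v := (hadj u v).2 (Or.inl rfl)
  have hA2 : ∀ i, T.Adj u (a i) := fun i => (hadj _ _).2 (Or.inr (Or.inl ⟨i, rfl⟩))
  have hA3 : ∀ i, T.Adj (a i) (b i) := fun i => (hadj _ _).2 (Or.inr (Or.inr ⟨i, rfl⟩))
  -- decode adjacency into endpoint identifications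
  have hNeg : ∀ x y : V, T.Adj x y →
      (x = u ∧ y = v) ∨ (x = v ∧ y = u) ∨
      (∃ i, x = u ∧ y = a i) ∨ (∃ i, x = a i ∧ y = u) ∨
      (∃ i, x = a i ∧ y = b i) ∨ (∃ i, x = b i ∧ y = a i) := by
    intro x y hxy
    rcases (hadj x y).1 hxy with h | ⟨i, h⟩ | ⟨i, h⟩ <;> rw [Sym2.eq_iff] at h
    · rcases h with ⟨rfl, rfl⟩ | ⟨rfl, rfl⟩
      · exact Or.inl ⟨rfl, rfl⟩
      · exact Or.inr (Or.inl ⟨rfl, rfl⟩)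
    · rcases h with ⟨rfl, rfl⟩ | ⟨rfl, rfl⟩
      · exact Or.inr (Or.inr (Or.inl ⟨i, rfl, rfl⟩))
      · exact Or.inr (Or.inr (Or.inr (Or.inl ⟨i, rfl, rfl⟩)))
    · rcases h with ⟨rfl, rfl⟩ | ⟨rfl, rfl⟩
      · exact Or.inr (Or.inr (Or.inr (Or.inr (Or.inl ⟨i, rfl, rfl⟩))))
      · exact Or.inr (Or.inr (Or.inr (Or.inr (Or.inr ⟨i, rfl, rfl⟩))))
  set Ψ : VC r → V := fun p => match p with
    | Sum.inl (Sum.inl _) => u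
    | Sum.inl (Sum.inr i) => a i
    | Sum.inr (Sum.inl _) => v
    | Sum.inr (Sum.inr i) => b i
    with hΨ
  have hbij : Function.Bijective Ψ := by
    constructor
    · rintro ((p | i) | (p | i)) ((q | j) | (q | j)) hpq <;>
        simp only [hΨ] at hpq
      · exact congrArg (fun t => Sum.inl (Sum.inl t)) (Subsingleton.elim _ _)
      · exact absurd hpq.symm (hau j)
      · exact absurd hpq huv
      · exact absurd hpq.symm (hbu j)
      · exact absurd hpq (hau i)
      · exact congrArg (fun t => Sum.inl (Sum.inr t)) (ha hpq)
      · exact absurd hpq (hav i)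
      · exact absurd hpq (hab i j)
      · exact absurd hpq.symm huv
      · exact absurd hpq.symm (hav j)
      · exact congrArg (fun t => Sum.inr (Sum.inl t)) (Subsingleton.elim _ _)
      · exact absurd hpq.symm (hbv j)
      · exact absurd hpq (hbu i)
      · exact absurd hpq.symm (hab j i)
      · exact absurd hpq (hbv i)
      · exact congrArg (fun t => Sum.inr (Sum.inr t)) (hb hpq)
    · intro x
      rcases hsurj x with rfl | rfl | ⟨i, rfl⟩ | ⟨i, rfl⟩
      · exact ⟨Sum.inl (Sum.inl 0), rfl⟩
      · exact ⟨Sum.inr (Sum.inl 0), rfl⟩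
      · exact ⟨Sum.inl (Sum.inr i), rfl⟩
      · exact ⟨Sum.inr (Sum.inr i), rfl⟩
  -- uniform non-adjacency facts
  have hFub : ∀ j, ¬ T.Adj u (b j) := by
    intro j h
    rcases hNeg _ _ h with ⟨_, h2⟩ | ⟨h1, _⟩ | ⟨i, _, h2⟩ | ⟨i, h1, _⟩ | ⟨i, h1, _⟩ | ⟨i, h1, _⟩
    · exact hbv j h2
    · exact huv h1
    · exact hab i j h2.symm
    · exact hau i h1.symm
    · exact hau i h1.symm
    · exact hbu i h1.symm
  have hFaa : ∀ i j, ¬ T.Adj (a i) (a j) := by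
    intro i j h
    rcases hNeg _ _ h with ⟨h1, _⟩ | ⟨h1, _⟩ | ⟨k, h1, _⟩ | ⟨k, _, h2⟩ | ⟨k, _, h2⟩ | ⟨k, h1, _⟩
    · exact hau i h1
    · exact hav i h1
    · exact hau i h1
    · exact hau j h2
    · exact hab j k h2
    · exact hab i k h1
  have hFav : ∀ i, ¬ T.Adj (a i) v := by
    intro i h
    rcases hNeg _ _ h with ⟨h1, _⟩ | ⟨h1, _⟩ | ⟨k, h1, _⟩ | ⟨k, _, h2⟩ | ⟨k, _, h2⟩ | ⟨k, h1, _⟩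
    · exact hau i h1
    · exact hav i h1
    · exact hau i h1
    · exact huv h2.symm
    · exact hbv k h2.symm
    · exact hab i k h1
  have hFvb : ∀ j, ¬ T.Adj v (b j) := by
    intro j h
    rcases hNeg _ _ h with ⟨h1, _⟩ | ⟨_, h2⟩ | ⟨k, h1, _⟩ | ⟨k, h1, _⟩ | ⟨k, h1, _⟩ | ⟨k, h1, _⟩
    · exact huv h1.symm
    · exact hbu j h2
    · exact huv h1.symm
    · exact hav k h1.symm
    · exact hav k h1.symm
    · exact hbv k h1.symm
  have hFbb : ∀ i j, ¬ T.Adj (b i) (b j) := by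
    intro i j h
    rcases hNeg _ _ h with ⟨h1, _⟩ | ⟨h1, _⟩ | ⟨k, h1, _⟩ | ⟨k, h1, _⟩ | ⟨k, h1, _⟩ | ⟨k, _, h2⟩
    · exact hbu i h1
    · exact hbv i h1
    · exact hbu i h1
    · exact hab k i h1.symm
    · exact hab k i h1.symm
    · exact hab k j h2.symm
  have hIab : ∀ i j, T.Adj (a i) (b j) → i = j := by
    intro i j h
    rcases hNeg _ _ h with ⟨h1, _⟩ | ⟨h1, _⟩ | ⟨k, h1, _⟩ | ⟨k, _, h2⟩ | ⟨k, h1, h2⟩ | ⟨k, h1, _⟩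
    · exact absurd h1 (hau i)
    · exact absurd h1 (hav i)
    · exact absurd h1 (hau i)
    · exact absurd h2 (hbu j)
    · exact (ha h1).trans (hb h2).symm
    · exact absurd h1 (hab i k)
  refine ⟨(SimpleGraph.Iso.symm ⟨Equiv.ofBijective Ψ hbij, ?_⟩ : T ≃g CG r)⟩
  rintro ((p | i) | (p | i)) ((q | j) | (q | j)) <;>
    simp only [Equiv.ofBijective_apply, hΨ]
  · -- u u
    constructor
    · intro h; exact absurd h T.irrefl
    · intro h
      rw [corona_adj_inl_inl] at h
      simp [completeBipartiteGraph] at h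
  · -- u aj
    constructor
    · intro _
      rw [corona_adj_inl_inl]
      simp [completeBipartiteGraph]
    · intro _; exact hA2 j
  · -- u v
    constructor
    · intro _
      rw [corona_adj_inl_inr]
      exact congrArg Sum.inl (Subsingleton.elim _ _)
    · intro _; exact hA1
  · -- u bj
    constructor
    · intro h
      rw [corona_adj_inl_inr]
      exact absurd h (hFub j)
    · intro h
      rw [corona_adj_inl_inr] at h
      simp at h
  · -- ai u
    constructor
    · intro _
      rw [corona_adj_inl_inl]
      simp [completeBipartiteGraph]
    · intro _; exact (hA2 i).symm
  · -- ai aj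
    constructor
    · intro h; exact absurd h (hFaa i j)
    · intro h
      rw [corona_adj_inl_inl] at h
      simp [completeBipartiteGraph] at h
  · -- ai v
    constructor
    · intro h; exact absurd h (hFav i)
    · intro h
      rw [corona_adj_inl_inr] at h
      simp at h
  · -- ai bj
    constructor
    · intro h
      rw [corona_adj_inl_inr]
      exact congrArg Sum.inr (hIab i j h)
    · intro h
      rw [corona_adj_inl_inr] at h
      obtain rfl : i = j := by simpa using h
      exact hA3 i
  · -- v u
    constructor
    · intro _
      rw [corona_adj_inr_inl]
      exact congrArg Sum.inl (Subsingleton.elim _ _)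
    · intro _; exact hA1.symm
  · -- v aj
    constructor
    · intro h; exact absurd h.symm (hFav j)
    · intro h
      rw [corona_adj_inr_inl] at h
      simp at h
  · -- v v
    constructor
    · intro h; exact absurd h T.irrefl
    · intro h; exact absurd h corona_adj_inr_inr
  · -- v bj
    constructor
    · intro h; exact absurd h (hFvb j)
    · intro h; exact absurd h corona_adj_inr_inr
  · -- bi u
    constructor
    · intro h; exact absurd h.symm (hFub i)
    · intro h
      rw [corona_adj_inr_inl] at h
      simp at h
  · -- bi aj
    constructor
    · intro h
      rw [corona_adj_inr_inl]
      exact congrArg Sum.inr (hIab j i h.symm)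
    · intro h
      rw [corona_adj_inr_inl] at h
      obtain rfl : j = i := by simpa using h
      exact (hA3 j).symm
  · -- bi v
    constructor
    · intro h; exact absurd h.symm (hFvb i)
    · intro h; exact absurd h corona_adj_inr_inr
  · -- bi bj
    constructor
    · intro h; exact absurd h (hFbb i j)
    · intro h; exact absurd h corona_adj_inr_inr

lemma sym2_exists_rep {V : Type*} (e : Sym2 V) : ∃ x y, e = s(x, y) := by
  induction e using Sym2.ind with
  | _ x y => exact ⟨x, y, rfl⟩

/-- Forward direction: subdividing all edges but one keeping γ forces corona of star. -/
lemma forward_direction {V : Type*} [Fintype V] (T : SimpleGraph V) (hT : T.IsTree)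
    (hn : 3 ≤ Fintype.card V) (F : Finset (Sym2 V)) (hFsub : ↑F ⊆ T.edgeSet)
    (hFcard : F.card = Fintype.card V - 2)
    (hγ : (T.subdiv F).domNum = T.domNum) :
    ∃ r : ℕ, 1 ≤ r ∧ Nonempty (T ≃g CG r) := by
  classical
  letI : Fintype T.edgeSet := Fintype.ofFinite _
  set n := Fintype.card V with hn'
  have hedgecard : T.edgeFinset.card = n - 1 := by
    have := hT.card_edgeFinset
    omega
  have hFss : F ⊆ T.edgeFinset := fun f hf => mem_edgeFinset.2 (hFsub hf)
  have hsd : (T.edgeFinset \ F).card = 1 := by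
    rw [Finset.card_sdiff_of_subset hFss]
    omega
  obtain ⟨e, he⟩ := Finset.card_eq_one.1 hsd
  have heE : e ∈ T.edgeFinset ∧ e ∉ F := by
    have : e ∈ T.edgeFinset \ F := by rw [he]; exact Finset.mem_singleton_self e
    exact ⟨(Finset.mem_sdiff.1 this).1, (Finset.mem_sdiff.1 this).2⟩
  have heF : e ∉ F := heE.2
  have hclass : ∀ g ∈ T.edgeSet, g = e ∨ g ∈ F := by
    intro g hg
    by_cases hgF : g ∈ F
    · exact Or.inr hgF
    · left
      have : g ∈ T.edgeFinset \ F := Finset.mem_sdiff.2 ⟨mem_edgeFinset.2 hg, hgF⟩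
      rw [he] at this
      exact Finset.mem_singleton.1 this
  obtain ⟨u₀, v₀, he'⟩ := sym2_exists_rep e
  have hadj₀ : T.Adj u₀ v₀ := by
    have := mem_edgeFinset.1 heE.1
    rw [he'] at this
    exact (T.mem_edgeSet).1 this
  have hne₀ : u₀ ≠ v₀ := hadj₀.ne
  have hkey : ∀ x y : V, (T.subdiv F).Adj (Sum.inl x) (Sum.inl y) ↔
      (T.Adj x y ∧ s(x, y) = e) := by
    intro x y
    rw [subdiv_adj_inl_inl]
    constructor
    · rintro ⟨hxy, hnF⟩
      rcases hclass _ ((T.mem_edgeSet).2 hxy) with h | h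
      · exact ⟨hxy, h⟩
      · exact absurd h hnF
    · rintro ⟨hxy, heq⟩
      exact ⟨hxy, heq ▸ heF⟩
  have hore : 2 * T.domNum ≤ n := two_mul_domNum_le hT.isConnected (by omega)
  obtain ⟨D, hDcard, hDdom⟩ := (T.subdiv F).exists_min_domSet
  have hDγ : D.card = T.domNum := by rw [hDcard, hγ]
  -- the choice of a dominator for every original vertex
  have hσex : ∀ x : V, ∃ d, d ∈ D ∧
      (d = Sum.inl x ∨ (T.subdiv F).Adj d (Sum.inl x)) := by
    intro x
    by_cases h : Sum.inl x ∈ D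
    · exact ⟨Sum.inl x, h, Or.inl rfl⟩
    · obtain ⟨d, hd, hadj⟩ := hDdom (Sum.inl x) (by simpa using h)
      exact ⟨d, by simpa using hd, Or.inr hadj⟩
  choose σ hσD hσrel using hσex
  -- partner function for the endpoints of e
  set pr : V → V := fun x => if x = u₀ then v₀ else u₀ with hpr
  have hprne : ∀ x, pr x ≠ x := by
    intro x
    rw [hpr]
    dsimp only
    split
    · rename_i h; rw [h]; exact fun hc => hne₀ hc.symm
    · rename_i h; exact fun hc => h hc.symm
  -- endpoints of the subdivided edges
  have hep : ∀ f : {e : Sym2 V // e ∈ F}, ∃ x y, (f : Sym2 V) = s(x, y) :=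
    fun f => sym2_exists_rep _
  choose ep1 ep2 hepv using hep
  -- target sets for the fibers of σ
  set tgt : (V ⊕ {e : Sym2 V // e ∈ F}) → Finset V := fun d => match d with
    | Sum.inl x => {x, pr x}
    | Sum.inr f => {ep1 f, ep2 f}
    with htgtdef
  have hfib_sub : ∀ d, Finset.univ.filter (fun v => σ v = d) ⊆ tgt d := by
    intro d x hx
    have hσx : σ x = d := (Finset.mem_filter.1 hx).2
    rcases hσrel x with h | h
    · rw [hσx] at h
      subst h
      simp [htgtdef]
    · rw [hσx] at h
      rcases d with z | f
      · rw [hkey] at h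
        obtain ⟨hadj, heq⟩ := h
        rw [he', Sym2.eq_iff] at heq
        simp only [htgtdef, Finset.mem_insert, Finset.mem_singleton]
        rcases heq with ⟨rfl, rfl⟩ | ⟨rfl, rfl⟩
        · right; rw [hpr]; simp
        · right; rw [hpr]; simp [hne₀.symm, hne₀]
      · rw [subdiv_adj_inr_inl, hepv f, Sym2.mem_iff] at h
        simp only [htgtdef, Finset.mem_insert, Finset.mem_singleton]
        exact h
  have htgtcard : ∀ d, (tgt d).card ≤ 2 := by
    intro d
    rcases d with z | f <;> simp only [htgtdef] <;>
      exact le_trans (Finset.card_insert_le _ _) (by simp)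
  have hcount : n = ∑ d ∈ D, (Finset.univ.filter (fun v => σ v = d)).card := by
    rw [hn']
    rw [← Finset.card_univ]
    exact Finset.card_eq_sum_card_fiberwise (fun v _ => hσD v)
  have hsum_le : ∑ d ∈ D, (Finset.univ.filter (fun v => σ v = d)).card ≤ 2 * D.card := by
    calc ∑ d ∈ D, (Finset.univ.filter (fun v => σ v = d)).card
        ≤ ∑ _d ∈ D, 2 := Finset.sum_le_sum (fun d _ =>
          le_trans (Finset.card_le_card (hfib_sub d)) (htgtcard d))
      _ = 2 * D.card := by rw [Finset.sum_const]; ring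
  have hDn : 2 * D.card = n := by omega
  have hfib_eq : ∀ d ∈ D, (Finset.univ.filter (fun v => σ v = d)).card = 2 := by
    by_contra hcon
    push_neg at hcon
    obtain ⟨d₀, hd₀, hne⟩ := hcon
    have hlt : ∑ d ∈ D, (Finset.univ.filter (fun v => σ v = d)).card <
        ∑ _d ∈ D, 2 := by
      apply Finset.sum_lt_sum
      · exact fun d _ => le_trans (Finset.card_le_card (hfib_sub d)) (htgtcard d)
      · refine ⟨d₀, hd₀, ?_⟩
        have := le_trans (Finset.card_le_card (hfib_sub d₀)) (htgtcard d₀)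
        omega
    rw [Finset.sum_const, smul_eq_mul] at hlt
    omega
  have hfib_all : ∀ d ∈ D, Finset.univ.filter (fun v => σ v = d) = tgt d := by
    intro d hd
    apply Finset.eq_of_subset_of_card_le (hfib_sub d)
    rw [hfib_eq d hd]
    exact htgtcard d
  have htgtσ : ∀ d ∈ D, ∀ x ∈ tgt d, σ x = d := by
    intro d hd x hx
    have : x ∈ Finset.univ.filter (fun v => σ v = d) := by rw [hfib_all d hd]; exact hx
    exact (Finset.mem_filter.1 this).2
  -- consequences for inl-elements of D
  have hAin : ∀ x, Sum.inl x ∈ D → σ x = Sum.inl x ∧ σ (pr x) = Sum.inl x := by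
    intro x hx
    constructor
    · exact htgtσ _ hx x (by simp [htgtdef])
    · exact htgtσ _ hx (pr x) (by simp [htgtdef])
  have hBin : ∀ f, Sum.inr f ∈ D → ∀ x, x ∈ (f : Sym2 V) → σ x = Sum.inr f := by
    intro f hf x hx
    rw [hepv f, Sym2.mem_iff] at hx
    refine htgtσ _ hf x ?_
    simp only [htgtdef, Finset.mem_insert, Finset.mem_singleton]
    exact hx
  have hMuniq : ∀ x (f g : {e : Sym2 V // e ∈ F}), Sum.inr f ∈ D → Sum.inr g ∈ D →
      x ∈ (f : Sym2 V) → x ∈ (g : Sym2 V) → f = g := by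
    intro x f g hf hg hxf hxg
    have h1 := hBin f hf x hxf
    have h2 := hBin g hg x hxg
    rw [h1] at h2
    exact Sum.inr.inj h2
  by_cases hcase : ∃ x, Sum.inl x ∈ D
  · -- Case (i): one endpoint of e lies in D
    obtain ⟨u, hu⟩ := hcase
    have hedge_of : ∀ x, Sum.inl x ∈ D → T.Adj x (pr x) ∧ s(x, pr x) = e := by
      intro x hx
      have h2 := hAin x hx
      rcases hσrel (pr x) with h | h
      · rw [h2.2] at h
        exact absurd (Sum.inl.inj h).symm (hprne x)
      · rw [h2.2, hkey] at h
        exact h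
    set v := pr u with hvdef
    have hadjuv : T.Adj u v := (hedge_of u hu).1
    have heuv : s(u, v) = e := (hedge_of u hu).2
    have hneuv : u ≠ v := hadjuv.ne
    have hσu : σ u = Sum.inl u := (hAin u hu).1
    have hσv : σ v = Sum.inl u := (hAin u hu).2
    have hpairσ : ∀ x, Sum.inl x ∈ D → σ u₀ = Sum.inl x := by
      intro x hx
      have h2 := hAin x hx
      have heq := (hedge_of x hx).2
      rw [he', Sym2.eq_iff] at heq
      rcases heq with ⟨h1, _⟩ | ⟨_, h2'⟩
      · rw [← h1]; exact h2.1
      · rw [← h2']; exact h2.2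
    have huniq : ∀ x, Sum.inl x ∈ D → x = u := fun x hx =>
      Sum.inl.inj ((hpairσ x hx).symm.trans (hpairσ u hu))
    have hunotf : ∀ f, Sum.inr f ∈ D → u ∉ (f : Sym2 V) := by
      intro f hf hmem
      exact absurd (hσu.symm.trans (hBin f hf u hmem)) (by simp)
    have hvnotf : ∀ f, Sum.inr f ∈ D → v ∉ (f : Sym2 V) := by
      intro f hf hmem
      exact absurd (hσv.symm.trans (hBin f hf v hmem)) (by simp)
    have hMcover : ∀ x, x ≠ u → x ≠ v →
        ∃ f, Sum.inr f ∈ D ∧ x ∈ (f : Sym2 V) := by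
      intro x hxu hxv
      rcases hh : σ x with z | f
      · exfalso
        have hz : z = u := huniq z (hh ▸ hσD x)
        rcases hσrel x with h | h
        · rw [hh] at h
          exact hxu ((Sum.inl.inj h) ▸ hz)
        · rw [hh, hz, hkey] at h
          have heq := h.2
          rw [← heuv, Sym2.eq_iff] at heq
          rcases heq with ⟨_, h2'⟩ | ⟨h1, _⟩
          · exact hxv h2'
          · exact hneuv h1
      · refine ⟨f, hh ▸ hσD x, ?_⟩
        rcases hσrel x with h | h
        · rw [hh] at h; exact absurd h (by simp)
        · rw [hh, subdiv_adj_inr_inl] at h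
          exact h
    -- the matching edges
    set Dr : Finset {e : Sym2 V // e ∈ F} :=
      F.attach.filter (fun f => Sum.inr f ∈ D) with hDrdef
    have hDrD : ∀ g : {g // g ∈ Dr}, Sum.inr (g : {e : Sym2 V // e ∈ F}) ∈ D :=
      fun g => (Finset.mem_filter.1 g.2).2
    have hDdecomp : D = insert (Sum.inl u) (Dr.image Sum.inr) := by
      ext d
      constructor
      · intro hd
        rcases d with z | f
        · rw [huniq z hd]; exact Finset.mem_insert_self _ _
        · exact Finset.mem_insert_of_mem (Finset.mem_image.2
            ⟨f, Finset.mem_filter.2 ⟨Finset.mem_attach _ _, hd⟩, rfl⟩)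
      · intro hd
        rcases Finset.mem_insert.1 hd with rfl | hd'
        · exact hu
        · obtain ⟨f, hf, rfl⟩ := Finset.mem_image.1 hd'
          exact (Finset.mem_filter.1 hf).2
    have hinl_not : (Sum.inl u : V ⊕ {e : Sym2 V // e ∈ F}) ∉ Dr.image Sum.inr := by
      intro hcon
      obtain ⟨f, _, hf⟩ := Finset.mem_image.1 hcon
      exact absurd hf (by simp)
    have hDcard3 : D.card = Dr.card + 1 := by
      rw [hDdecomp, Finset.card_insert_of_notMem hinl_not,
        Finset.card_image_of_injective _ Sum.inr_injective]
    set r := Dr.card with hrdef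
    have hnr : n = 2 * r + 2 := by omega
    have hr1 : 1 ≤ r := by omega
    -- the star edges
    set Est : Finset {e : Sym2 V // e ∈ F} :=
      F.attach.filter (fun f => Sum.inr f ∉ D) with hEstdef
    have hEstcard : Est.card = r := by
      have hsplit := Finset.card_filter_add_card_filter_not
        (s := F.attach) (p := fun f => Sum.inr f ∈ D)
      rw [Finset.card_attach] at hsplit
      have : Dr.card + Est.card = F.card := hsplit
      omega
    have hEstu : ∀ f : {e : Sym2 V // e ∈ F}, f ∈ Est → u ∈ (f : Sym2 V) := by
      intro f hf
      have hfD : Sum.inr f ∉ D := (Finset.mem_filter.1 hf).2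
      obtain ⟨d, hd, hadj⟩ := hDdom (Sum.inr f) (by simpa using hfD)
      rcases d with z | g
      · have hz : z = u := huniq z (by simpa using hd)
        rw [subdiv_adj_inl_inr] at hadj
        exact hz ▸ hadj
      · exact absurd hadj subdiv_adj_inr_inr
    have hyg : ∀ f : {f : {e : Sym2 V // e ∈ F} // f ∈ Est},
        ∃ y, ((f : {e : Sym2 V // e ∈ F}) : Sym2 V) = s(u, y) :=
      fun f => Sym2.mem_iff_exists.1 (hEstu f.1 f.2)
    choose Y hY using hyg
    have hadjY : ∀ f, T.Adj u (Y f) := by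
      intro f
      have := hFsub f.1.2
      rw [hY f] at this
      exact (T.mem_edgeSet).1 this
    have hYu : ∀ f, Y f ≠ u := fun f => (hadjY f).ne'
    have hYv : ∀ f, Y f ≠ v := by
      intro f h
      apply heF
      have h2 := f.1.2
      rw [hY f, h, heuv] at h2
      exact h2
    have hξex : ∀ f : {f : {e : Sym2 V // e ∈ F} // f ∈ Est},
        ∃ g : {e : Sym2 V // e ∈ F}, Sum.inr g ∈ D ∧ Y f ∈ (g : Sym2 V) :=
      fun f => hMcover (Y f) (hYu f) (hYv f)
    choose ξ0 hξD hξmem using hξex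
    set ξ : {f : {e : Sym2 V // e ∈ F} // f ∈ Est} → {g // g ∈ Dr} :=
      fun f => ⟨ξ0 f, Finset.mem_filter.2 ⟨Finset.mem_attach _ _, hξD f⟩⟩ with hξdef
    have hbridge : ∀ (y1 y2 : V), T.Adj u y1 → T.Adj u y2 → y1 ≠ y2 →
        ¬ T.Adj y1 y2 := by
      intro y1 y2 h1 h2 hne hadj
      have hmem : s(y1, y2) ∈ T.edgeSet := (T.mem_edgeSet).2 hadj
      have hbr := isAcyclic_iff_forall_edge_isBridge.1 hT.IsAcyclic hmem
      rw [isBridge_iff] at hbr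
      apply hbr
      have ha1 : (T \ fromEdgeSet {s(y1, y2)}).Adj y1 u := by
        rw [sdiff_adj]
        refine ⟨h1.symm, ?_⟩
        rw [fromEdgeSet_adj]
        rintro ⟨hmem', -⟩
        rw [Set.mem_singleton_iff, Sym2.eq_iff] at hmem'
        rcases hmem' with ⟨-, h2'⟩ | ⟨h1', -⟩
        · exact h2.ne h2'
        · exact hne h1'
      have ha2 : (T \ fromEdgeSet {s(y1, y2)}).Adj u y2 := by
        rw [sdiff_adj]
        refine ⟨h2, ?_⟩
        rw [fromEdgeSet_adj]
        rintro ⟨hmem', -⟩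
        rw [Set.mem_singleton_iff, Sym2.eq_iff] at hmem'
        rcases hmem' with ⟨h1', -⟩ | ⟨h2', -⟩
        · exact h1.ne h1'
        · exact h2.ne h2'
      exact ⟨Walk.cons ha1 (Walk.cons ha2 Walk.nil)⟩
    have hξinj : Function.Injective ξ := by
      intro f1 f2 heq
      have hval : ξ0 f1 = ξ0 f2 := congrArg Subtype.val heq
      by_cases hyy : Y f1 = Y f2
      · have : ((f1 : {e : Sym2 V // e ∈ F}) : Sym2 V) =
            ((f2 : {e : Sym2 V // e ∈ F}) : Sym2 V) := by
          rw [hY f1, hY f2, hyy]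
        exact Subtype.ext (Subtype.ext this)
      · exfalso
        have hm1 : Y f1 ∈ ((ξ0 f1 : {e : Sym2 V // e ∈ F}) : Sym2 V) := hξmem f1
        have hm2 : Y f2 ∈ ((ξ0 f1 : {e : Sym2 V // e ∈ F}) : Sym2 V) := by
          rw [hval]; exact hξmem f2
        have hval2 : ((ξ0 f1 : {e : Sym2 V // e ∈ F}) : Sym2 V) = s(Y f1, Y f2) :=
          (Sym2.mem_and_mem_iff hyy).1 ⟨hm1, hm2⟩
        have hadj12 : T.Adj (Y f1) (Y f2) := by
          have := hFsub (ξ0 f1).2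
          rw [hval2] at this
          exact (T.mem_edgeSet).1 this
        exact hbridge _ _ (hadjY f1) (hadjY f2) hyy hadj12
    have hcards : Fintype.card {f : {e : Sym2 V // e ∈ F} // f ∈ Est} =
        Fintype.card {g // g ∈ Dr} := by
      rw [Fintype.card_coe, Fintype.card_coe, hEstcard]
    have hξbij : Function.Bijective ξ :=
      (Fintype.bijective_iff_injective_and_card ξ).2 ⟨hξinj, hcards⟩
    choose ζ hζ using hξbij.surjective
    have hζξ : ∀ f, ζ (ξ f) = f := fun f => hξinj (hζ (ξ f))
    set A : {g // g ∈ Dr} → V := fun g => Y (ζ g) with hAdef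
    have hAmem : ∀ g : {g // g ∈ Dr},
        A g ∈ ((g : {e : Sym2 V // e ∈ F}) : Sym2 V) := by
      intro g
      have h1 := hξmem (ζ g)
      have h2 : ξ0 (ζ g) = (g : {e : Sym2 V // e ∈ F}) := congrArg Subtype.val (hζ g)
      rw [h2] at h1
      exact h1
    have hAadj : ∀ g, T.Adj u (A g) := fun g => hadjY (ζ g)
    have hABrep : ∀ g : {g // g ∈ Dr},
        ∃ bb, ((g : {e : Sym2 V // e ∈ F}) : Sym2 V) = s(A g, bb) :=
      fun g => Sym2.mem_iff_exists.1 (hAmem g)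
    choose B hAB using hABrep
    have hBmem : ∀ g : {g // g ∈ Dr},
        B g ∈ ((g : {e : Sym2 V // e ∈ F}) : Sym2 V) := by
      intro g
      rw [hAB g]
      exact Sym2.mem_mk_right _ _
    have hABadj : ∀ g, T.Adj (A g) (B g) := by
      intro g
      have := hFsub (g : {e : Sym2 V // e ∈ F}).2
      rw [hAB g] at this
      exact (T.mem_edgeSet).1 this
    have hpairuniq : ∀ x (g g' : {g // g ∈ Dr}),
        x ∈ ((g : {e : Sym2 V // e ∈ F}) : Sym2 V) →
        x ∈ ((g' : {e : Sym2 V // e ∈ F}) : Sym2 V) → g = g' :=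
      fun x g g' h h' => Subtype.ext (hMuniq x _ _ (hDrD g) (hDrD g') h h')
    let m : Fin r ≃ {g // g ∈ Dr} := (Finset.equivFin Dr).symm
    refine ⟨r, hr1, iso_of_witness T u v (fun i => A (m i)) (fun i => B (m i))
      hneuv ?_ ?_ ?_ ?_ ?_ ?_ ?_ ?_ ?_⟩
    · intro i h
      exact hunotf _ (hDrD (m i)) (h ▸ hAmem (m i))
    · intro i h
      exact hvnotf _ (hDrD (m i)) (h ▸ hAmem (m i))
    · intro i h
      exact hunotf _ (hDrD (m i)) (h ▸ hBmem (m i))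
    · intro i h
      exact hvnotf _ (hDrD (m i)) (h ▸ hBmem (m i))
    · intro i j h
      have h' : A (m i) = B (m j) := h
      have hmm : m i = m j := hpairuniq (A (m i)) _ _ (hAmem (m i))
        (by rw [h']; exact hBmem (m j))
      have hij : i = j := m.injective hmm
      subst hij
      exact (hABadj (m i)).ne h'
    · intro i j h
      have h' : A (m i) = A (m j) := h
      have hmm : m i = m j := hpairuniq (A (m i)) _ _ (hAmem (m i))
        (by rw [h']; exact hAmem (m j))
      exact m.injective hmm
    · intro i j h
      have h' : B (m i) = B (m j) := h
      have hmm : m i = m j := hpairuniq (B (m i)) _ _ (hBmem (m i))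
        (by rw [h']; exact hBmem (m j))
      exact m.injective hmm
    · intro x
      by_cases hxu : x = u
      · exact Or.inl hxu
      by_cases hxv : x = v
      · exact Or.inr (Or.inl hxv)
      obtain ⟨f, hfD, hmemx⟩ := hMcover x hxu hxv
      set g : {g // g ∈ Dr} :=
        ⟨f, Finset.mem_filter.2 ⟨Finset.mem_attach _ _, hfD⟩⟩ with hgdef
      have hxg : x ∈ ((g : {e : Sym2 V // e ∈ F}) : Sym2 V) := hmemx
      rw [hAB g, Sym2.mem_iff] at hxg
      rcases hxg with rfl | rfl
      · refine Or.inr (Or.inr (Or.inl ⟨m.symm g, ?_⟩))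
        show A g = A (m (m.symm g))
        rw [Equiv.apply_symm_apply]
      · refine Or.inr (Or.inr (Or.inr ⟨m.symm g, ?_⟩))
        show B g = B (m (m.symm g))
        rw [Equiv.apply_symm_apply]
    · intro x y
      constructor
      · intro hxy
        rcases hclass _ ((T.mem_edgeSet).2 hxy) with h | h
        · exact Or.inl (by rw [h, ← heuv])
        · set fsub : {e : Sym2 V // e ∈ F} := ⟨s(x, y), h⟩ with hfsubdef
          by_cases hfd : Sum.inr fsub ∈ D
          · set g : {g // g ∈ Dr} :=
              ⟨fsub, Finset.mem_filter.2 ⟨Finset.mem_attach _ _, hfd⟩⟩ with hgdef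
            refine Or.inr (Or.inr ⟨m.symm g, ?_⟩)
            show s(x, y) = s(A (m (m.symm g)), B (m (m.symm g)))
            rw [Equiv.apply_symm_apply]
            exact hAB g
          · set fe : {f : {e : Sym2 V // e ∈ F} // f ∈ Est} :=
              ⟨fsub, Finset.mem_filter.2 ⟨Finset.mem_attach _ _, hfd⟩⟩ with hfedef
            refine Or.inr (Or.inl ⟨m.symm (ξ fe), ?_⟩)
            show s(x, y) = s(u, A (m (m.symm (ξ fe))))
            rw [Equiv.apply_symm_apply]
            show s(x, y) = s(u, Y (ζ (ξ fe)))
            rw [hζξ fe]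
            exact hY fe
      · rintro (h | ⟨i, h⟩ | ⟨i, h⟩)
        · have h2 : s(u, v) ∈ T.edgeSet := (T.mem_edgeSet).2 hadjuv
          rw [← h] at h2
          exact (T.mem_edgeSet).1 h2
        · have h2 : s(u, A (m i)) ∈ T.edgeSet := (T.mem_edgeSet).2 (hAadj (m i))
          rw [← h] at h2
          exact (T.mem_edgeSet).1 h2
        · have h2 : s(A (m i), B (m i)) ∈ T.edgeSet :=
            (T.mem_edgeSet).2 (hABadj (m i))
          rw [← h] at h2
          exact (T.mem_edgeSet).1 h2
  · -- Case (ii): no original vertex in D; forces n = 4, T ≅ P4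
    push_neg at hcase
    have hσinr : ∀ x : V, ∃ f, σ x = Sum.inr f ∧ x ∈ (f : Sym2 V) := by
      intro x
      rcases hh : σ x with z | f
      · exact absurd (hh ▸ hσD x) (hcase z)
      · refine ⟨f, rfl, ?_⟩
        rcases hσrel x with h | h
        · rw [hh] at h; exact absurd h (by simp)
        · rw [hh, subdiv_adj_inr_inl] at h
          exact h
    have hall : ∀ g (hg : g ∈ F), Sum.inr (⟨g, hg⟩ : {e : Sym2 V // e ∈ F}) ∈ D := by
      intro g hg
      by_contra hnot
      obtain ⟨d, hd, hadj⟩ := hDdom (Sum.inr ⟨g, hg⟩) (by simpa using hnot)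
      rcases d with z | f
      · exact hcase z (by simpa using hd)
      · exact absurd hadj subdiv_adj_inr_inr
    -- card comparison forces n = 4
    have hFD : F.card ≤ D.card := by
      have hmap : ∀ f ∈ F.attach, Sum.inr f ∈ D := fun f _ => by
        have := hall f.1 f.2
        simpa using this
      have hinj : Set.InjOn (fun f : {e : Sym2 V // e ∈ F} =>
          (Sum.inr f : V ⊕ {e : Sym2 V // e ∈ F})) ↑F.attach := by
        intro f _ g _ hfg
        exact Sum.inr.inj hfg
      have := Finset.card_le_card_of_injOn _ hmap hinj
      simpa using this
    have hn4 : n = 4 := by omega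
    have hD2 : D.card = 2 := by omega
    have hF2 : F.card = 2 := by omega
    -- the two matching edges
    obtain ⟨f1, hσ1, h1m⟩ := hσinr u₀
    obtain ⟨f2, hσ2, h2m⟩ := hσinr v₀
    have hf1D : Sum.inr f1 ∈ D := hσ1 ▸ hσD u₀
    have hf2D : Sum.inr f2 ∈ D := hσ2 ▸ hσD v₀
    have hf12 : f1 ≠ f2 := by
      intro hcon
      subst hcon
      have : (f1 : Sym2 V) = s(u₀, v₀) := (Sym2.mem_and_mem_iff hne₀).1 ⟨h1m, h2m⟩
      rw [← he'] at this
      exact heF (this ▸ f1.2)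
    obtain ⟨p, hp⟩ := Sym2.mem_iff_exists.1 h1m
    obtain ⟨w, hw⟩ := Sym2.mem_iff_exists.1 h2m
    have hpmem : p ∈ (f1 : Sym2 V) := by rw [hp]; exact Sym2.mem_mk_right _ _
    have hwmem : w ∈ (f2 : Sym2 V) := by rw [hw]; exact Sym2.mem_mk_right _ _
    have hadj1 : T.Adj u₀ p := by
      have := hFsub f1.2
      rw [hp] at this
      exact (T.mem_edgeSet).1 this
    have hadj2 : T.Adj v₀ w := by
      have := hFsub f2.2
      rw [hw] at this
      exact (T.mem_edgeSet).1 this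
    have hdisj : ∀ x, x ∈ (f1 : Sym2 V) → x ∈ (f2 : Sym2 V) → False :=
      fun x h1 h2 => hf12 (hMuniq x f1 f2 hf1D hf2D h1 h2)
    -- F is exactly {f1, f2}
    have hFeq : F = {(f1 : Sym2 V), (f2 : Sym2 V)} := by
      symm
      apply Finset.eq_of_subset_of_card_le
      · intro g hg
        rcases Finset.mem_insert.1 hg with rfl | hg'
        · exact f1.2
        · rw [Finset.mem_singleton] at hg'
          exact hg' ▸ f2.2
      · rw [hF2]
        rw [Finset.card_insert_of_notMem (by
          rw [Finset.mem_singleton]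
          intro hcon
          exact hdisj u₀ h1m (hcon ▸ h1m)), Finset.card_singleton]
    -- build the witness for r = 1
    refine ⟨1, le_refl 1, iso_of_witness T u₀ p (fun _ => v₀) (fun _ => w)
      hadj1.ne ?_ ?_ ?_ ?_ ?_ ?_ ?_ ?_ ?_⟩
    · intro _; exact hne₀.symm
    · intro _ hc; exact hdisj p hpmem (hc ▸ h2m)
    · intro _ hc; exact hdisj u₀ h1m (hc ▸ hwmem)
    · intro _ hc; exact hdisj p hpmem (hc ▸ hwmem)
    · intro _ _ hc; exact hadj2.ne hc
    · intro i j _; exact Subsingleton.elim i j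
    · intro i j _; exact Subsingleton.elim i j
    · intro x
      obtain ⟨f, hσx, hxm⟩ := hσinr x
      have hmem2 : ∀ gv ∈ F, gv = (f1 : Sym2 V) ∨ gv = (f2 : Sym2 V) := by
        intro gv hgv
        rw [hFeq] at hgv
        simpa using Finset.mem_insert.1 hgv
      rcases hmem2 (f : Sym2 V) f.2 with hf' | hf'
      · have : x ∈ (f1 : Sym2 V) := hf' ▸ hxm
        rw [hp, Sym2.mem_iff] at this
        rcases this with rfl | rfl
        · exact Or.inl rfl
        · exact Or.inr (Or.inl rfl)
      · have : x ∈ (f2 : Sym2 V) := hf' ▸ hxm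
        rw [hw, Sym2.mem_iff] at this
        rcases this with rfl | rfl
        · exact Or.inr (Or.inr (Or.inl ⟨0, rfl⟩))
        · exact Or.inr (Or.inr (Or.inr ⟨0, rfl⟩))
    · intro x y
      constructor
      · intro hxy
        rcases hclass _ ((T.mem_edgeSet).2 hxy) with h | h
        · refine Or.inr (Or.inl ⟨0, ?_⟩)
          show s(x, y) = s(u₀, v₀)
          rw [h, he']
        · rw [hFeq] at h
          rcases Finset.mem_insert.1 h with h' | h'
          · left
            show s(x, y) = s(u₀, p)
            rw [h', hp]
          · rw [Finset.mem_singleton] at h'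
            refine Or.inr (Or.inr ⟨0, ?_⟩)
            show s(x, y) = s(v₀, w)
            rw [h', hw]
      · rintro (h | ⟨i, h⟩ | ⟨i, h⟩)
        · have : s(x, y) ∈ T.edgeSet := by
            rw [h, ← hp]
            exact hFsub f1.2
          exact (T.mem_edgeSet).1 this
        · have : s(x, y) ∈ T.edgeSet := by
            rw [h, ← he']
            exact (T.mem_edgeFinset).1 heE.1
          exact (T.mem_edgeSet).1 this
        · have : s(x, y) ∈ T.edgeSet := by
            rw [h, ← hw]
            exact hFsub f2.2
          exact (T.mem_edgeSet).1 this

end CoronaStar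





end SimpleGraph

theorem stmt16 {V : Type*} [Fintype V] (T : SimpleGraph V) (hT : T.IsTree)
    (hn : 3 ≤ Fintype.card V) (q : ℕ) (h : T.IsQCritical q) :
    q = Fintype.card V - 1 ↔
      ∃ r : ℕ, 1 ≤ r ∧
        Nonempty (T ≃g (completeBipartiteGraph (Fin 1) (Fin r)).corona) := by
  constructor
  · intro hq
    obtain ⟨F, hsub, hcard, heq⟩ := h.2
    have hc2 : F.card = Fintype.card V - 2 := by
      rw [hcard, hq]
      omega
    obtain ⟨r, hr, ⟨φ⟩⟩ := SimpleGraph.forward_direction T hT hn F hsub hc2 heq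
    exact ⟨r, hr, ⟨φ⟩⟩
  · rintro ⟨r, hr, ⟨φ⟩⟩
    exact SimpleGraph.backward_direction T hT hr φ h
end
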